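/- arXiv:2203.06417 — 5 statements merged into one kernel-verified Lean document; each statement's English description precedes it below -/
import Mathlib

section
/- Fix n ≥ 1, p ≥ 2, m < p, and k⁻, k⁺, l⁺ ∈ X_n. The number of α ∈ ODCI_n with min(im α) = k⁻, max(im α) = k⁺, max(dom α) = l⁺, exactly m fixed points, and height h(α) = p equals C(l⁺ − k⁺ + p − m − 2, p − m − 1)·C(k⁺ − k⁻ − 1, p − 2). -/
/-- `f` is a partial injective transformation (injectivity on its domain). -/
def PInj {n : ℕ} (f : Fin n → Option (Fin n)) : Prop :=
  ∀ x y a, f x = some a → f y = some a → x = y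

/-- `f` is a contraction: `|xα - yα| ≤ |x - y|` for all `x, y` in the domain. -/
def Contr {n : ℕ} (f : Fin n → Option (Fin n)) : Prop :=
  ∀ x y a b, f x = some a → f y = some b →
    |(a.val : ℤ) - (b.val : ℤ)| ≤ |(x.val : ℤ) - (y.val : ℤ)|

/-- `f` is order-preserving on its domain. -/
def OrdPres {n : ℕ} (f : Fin n → Option (Fin n)) : Prop :=
  ∀ x y a b, f x = some a → f y = some b → x ≤ y → a ≤ b

/-- `f` is order-reversing on its domain. -/
def OrdRev {n : ℕ} (f : Fin n → Option (Fin n)) : Prop :=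
  ∀ x y a b, f x = some a → f y = some b → x ≤ y → b ≤ a

/-- `f` is order-decreasing on its domain. -/
def OrdDecr {n : ℕ} (f : Fin n → Option (Fin n)) : Prop :=
  ∀ x a, f x = some a → a ≤ x

/-- The image set of the partial map `f`. -/
def pim {n : ℕ} (f : Fin n → Option (Fin n)) : Finset (Fin n) :=
  Finset.univ.filter (fun b => ∃ x, f x = some b)

/-- The domain set of the partial map `f`. -/
def pdom {n : ℕ} (f : Fin n → Option (Fin n)) : Finset (Fin n) :=
  Finset.univ.filter (fun x => (f x).isSome)

/-- The height (rank) of the partial map `f`: the size of its image. -/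
def pheight {n : ℕ} (f : Fin n → Option (Fin n)) : ℕ := (pim f).card

/-- The number of fixed points of the partial map `f`. -/
def pfix {n : ℕ} (f : Fin n → Option (Fin n)) : ℕ :=
  (Finset.univ.filter (fun x => f x = some x)).card

/-- Integer binomial coefficient, `0` whenever `b < 0` or `b > a`. -/
def ichoose (a b : ℤ) : ℕ :=
  if 0 ≤ b ∧ b ≤ a then a.toNat.choose b.toNat else 0


namespace ODCIaux
open Finset

lemma min_eq_coe {α : Type*} [LinearOrder α] {s : Finset α} {a : α}
    (ha : a ∈ s) (h : ∀ b ∈ s, a ≤ b) : s.min = (a : WithTop α) := by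
  have hne : s.Nonempty := ⟨a, ha⟩
  rw [← Finset.coe_min' hne]
  exact congrArg _ (le_antisymm (Finset.min'_le s a ha) (Finset.le_min' s hne a h))

lemma max_eq_coe {α : Type*} [LinearOrder α] {s : Finset α} {a : α}
    (ha : a ∈ s) (h : ∀ b ∈ s, b ≤ a) : s.max = (a : WithBot α) := by
  have hne : s.Nonempty := ⟨a, ha⟩
  rw [← Finset.coe_max' hne]
  exact congrArg _ (le_antisymm (Finset.max'_le s hne a h) (Finset.le_max' s a ha))

def mk {n p : ℕ} (g Y : Fin p → Fin n) : Fin n → Option (Fin n) :=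
  fun x => ((List.finRange p).find? (fun i => decide (g i = x))).map Y

lemma mk_eq_some {n p : ℕ} {g Y : Fin p → Fin n} (hg : Function.Injective g)
    {x a : Fin n} : mk g Y x = some a ↔ ∃ i, g i = x ∧ Y i = a := by
  unfold mk
  constructor
  · intro h
    rw [Option.map_eq_some_iff] at h
    obtain ⟨j, hj, rfl⟩ := h
    exact ⟨j, by simpa using List.find?_some hj, rfl⟩
  · rintro ⟨i, hgi, rfl⟩
    have hs : (((List.finRange p).find? (fun i => decide (g i = x)))).isSome := by
      rw [List.find?_isSome]
      exact ⟨i, List.mem_finRange i, by simp [hgi]⟩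
    obtain ⟨j, hj⟩ := Option.isSome_iff_exists.mp hs
    have hgj : g j = x := by simpa using List.find?_some hj
    have hji : j = i := hg (hgj.trans hgi.symm)
    rw [hj, Option.map_some]
    exact congrArg some (congrArg Y hji)

lemma mk_isSome_iff {n p : ℕ} {g Y : Fin p → Fin n} {x : Fin n} :
    (mk g Y x).isSome ↔ ∃ i, g i = x := by
  unfold mk
  rw [Option.isSome_map, List.find?_isSome]
  simp

lemma pdom_mk {n p : ℕ} {g Y : Fin p → Fin n} :
    pdom (mk g Y) = Finset.image g Finset.univ := by
  ext x
  simp only [pdom, Finset.mem_filter, Finset.mem_univ, true_and, Finset.mem_image,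
    mk_isSome_iff]

lemma pim_mk {n p : ℕ} {g Y : Fin p → Fin n} (hg : Function.Injective g) :
    pim (mk g Y) = Finset.image Y Finset.univ := by
  ext b
  simp only [pim, Finset.mem_filter, Finset.mem_univ, true_and, Finset.mem_image]
  constructor
  · rintro ⟨x, hx⟩
    obtain ⟨i, -, rfl⟩ := (mk_eq_some hg).mp hx
    exact ⟨i, rfl⟩
  · rintro ⟨i, -, rfl⟩
    exact ⟨g i, (mk_eq_some hg).mpr ⟨i, rfl, rfl⟩⟩

lemma mem_iff_lt_card_of_dc {p : ℕ} {S : Finset (Fin p)}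
    (hdc : ∀ i j : Fin p, j ≤ i → i ∈ S → j ∈ S) (i : Fin p) :
    i ∈ S ↔ i.val < S.card := by
  constructor
  · intro hi
    have hsub : Finset.Iic i ⊆ S := fun j hj => hdc i j (Finset.mem_Iic.mp hj) hi
    have := Finset.card_le_card hsub
    rw [Fin.card_Iic] at this; omega
  · intro hi
    by_contra hmem
    have hsub : S ⊆ Finset.Iio i := by
      intro x hx
      rw [Finset.mem_Iio]
      by_contra hxi
      exact hmem (hdc x i (le_of_not_gt hxi) hx)
    have := Finset.card_le_card hsub
    rw [Fin.card_Iio] at this; omega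

lemma card_filter_lt {p m : ℕ} (hm : m < p) :
    (Finset.univ.filter (fun i : Fin p => i.val < m)).card = m := by
  have : (Finset.univ.filter (fun i : Fin p => i.val < m)) = Finset.Iio ⟨m, hm⟩ := by
    ext i; simp [Fin.lt_def]
  rw [this, Fin.card_Iio]

lemma strictMono_gap' {r : ℕ} {e : Fin r → ℕ} (he : StrictMono e) :
    ∀ (k : ℕ) (i j : Fin r), i.val + k = j.val → e i + k ≤ e j := by
  intro k
  induction k with
  | zero =>
    intro i j h
    have : i = j := Fin.ext (by omega)
    simp [this]
  | succ k ih =>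
    intro i j h
    have hj' : i.val + k < r := by omega
    have h1 := ih i ⟨i.val + k, hj'⟩ rfl
    have h2 : e ⟨i.val + k, hj'⟩ < e j := he (by simp [Fin.lt_def]; omega)
    omega

lemma strictMono_gap {r : ℕ} {e : Fin r → ℕ} (he : StrictMono e)
    (i j : Fin r) (hij : i ≤ j) : e i + (j.val - i.val) ≤ e j :=
  strictMono_gap' he (j.val - i.val) i j (by omega)

end ODCIaux
namespace ODCIaux

/-- Property of the image sequence. -/
def PY {n : ℕ} (p : ℕ) (kminus kplus : Fin n) (Y : Fin p → Fin n) : Prop :=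
  StrictMono Y ∧ (∀ i : Fin p, i.val = 0 → Y i = kminus) ∧
    (∀ i : Fin p, i.val = p - 1 → Y i = kplus)

/-- Property of the displacement sequence. -/
def Qd {n : ℕ} (p m : ℕ) (kplus lplus : Fin n) (d : Fin p → ℕ) : Prop :=
  Monotone d ∧ (∀ i : Fin p, d i = 0 ↔ i.val < m) ∧
    (∀ i : Fin p, i.val = p - 1 → kplus.val + d i = lplus.val)

lemma abs_helper {a b x y : ℤ} (h1 : a ≤ b) (h2 : x ≤ y) (h3 : b - a ≤ y - x) :
    |a - b| ≤ |x - y| := by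
  rw [abs_sub_comm a b, abs_sub_comm x y, abs_of_nonneg (by omega), abs_of_nonneg (by omega)]
  omega

variable {n p m : ℕ} {kminus kplus lplus : Fin n}

lemma bound_of (hp : 0 < p) {Y : Fin p → Fin n} {d : Fin p → ℕ}
    (hY : PY p kminus kplus Y) (hd : Qd p m kplus lplus d) (i : Fin p) :
    (Y i).val + d i < n := by
  have hil : p - 1 < p := by omega
  have hle : i ≤ (⟨p - 1, hil⟩ : Fin p) := by
    rw [Fin.le_def]; exact Nat.le_sub_one_of_lt i.isLt
  have h1 : (Y i).val ≤ (Y ⟨p - 1, hil⟩).val := hY.1.monotone hle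
  have h2 : d i ≤ d ⟨p - 1, hil⟩ := hd.1 hle
  have h3 : (Y ⟨p - 1, hil⟩).val = kplus.val := by rw [hY.2.2 _ rfl]
  have h4 := hd.2.2 ⟨p - 1, hil⟩ rfl
  have := lplus.isLt
  omega

/-- The domain sequence. -/
def mkg {n p : ℕ} (Y : Fin p → Fin n) (d : Fin p → ℕ)
    (hb : ∀ i, (Y i).val + d i < n) : Fin p → Fin n :=
  fun i => ⟨(Y i).val + d i, hb i⟩

lemma mkg_strictMono {Y : Fin p → Fin n} {d : Fin p → ℕ}
    {hb : ∀ i, (Y i).val + d i < n} (hY : StrictMono Y) (hd : Monotone d) :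
    StrictMono (mkg Y d hb) := by
  intro i j hij
  have h1 : (Y i).val < (Y j).val := hY hij
  have h2 : d i ≤ d j := hd hij.le
  simp only [mkg, Fin.mk_lt_mk]
  omega

lemma mkf_prop (hp : 2 ≤ p) (hm : m < p) {Y : Fin p → Fin n} {d : Fin p → ℕ}
    (hY : PY p kminus kplus Y) (hd : Qd p m kplus lplus d)
    (hb : ∀ i, (Y i).val + d i < n) :
    PInj (mk (mkg Y d hb) Y) ∧ Contr (mk (mkg Y d hb) Y) ∧
    OrdPres (mk (mkg Y d hb) Y) ∧ OrdDecr (mk (mkg Y d hb) Y) ∧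
    (pim (mk (mkg Y d hb) Y)).min = (kminus : WithTop (Fin n)) ∧
    (pim (mk (mkg Y d hb) Y)).max = (kplus : WithBot (Fin n)) ∧
    (pdom (mk (mkg Y d hb) Y)).max = (lplus : WithBot (Fin n)) ∧
    pfix (mk (mkg Y d hb) Y) = m ∧ pheight (mk (mkg Y d hb) Y) = p := by
  set g := mkg Y d hb with hgdef
  have hg : StrictMono g := mkg_strictMono hY.1 hd.1
  have hginj : Function.Injective g := hg.injective
  have hgval : ∀ i, (g i).val = (Y i).val + d i := fun i => rfl
  have hil : p - 1 < p := by omega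
  set il : Fin p := ⟨p - 1, hil⟩ with hildef
  set i0 : Fin p := ⟨0, by omega⟩ with hi0def
  have hY0 : Y i0 = kminus := hY.2.1 i0 rfl
  have hYl : Y il = kplus := hY.2.2 il rfl
  have hdl : kplus.val + d il = lplus.val := hd.2.2 il rfl
  have hle_il : ∀ i : Fin p, i ≤ il := fun i => by
    rw [Fin.le_def]; exact Nat.le_sub_one_of_lt i.isLt
  have h0le : ∀ i : Fin p, i0 ≤ i := fun i => by
    rw [Fin.le_def]; exact Nat.zero_le _
  refine ⟨?_, ?_, ?_, ?_, ?_, ?_, ?_, ?_, ?_⟩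
  · -- PInj
    intro x y a hx hy
    obtain ⟨i, hgi, hYi⟩ := (mk_eq_some hginj).mp hx
    obtain ⟨j, hgj, hYj⟩ := (mk_eq_some hginj).mp hy
    have : i = j := hY.1.injective (hYi.trans hYj.symm)
    rw [← hgi, ← hgj, this]
  · -- Contr
    intro x y a b hx hy
    obtain ⟨i, hgi, hYi⟩ := (mk_eq_some hginj).mp hx
    obtain ⟨j, hgj, hYj⟩ := (mk_eq_some hginj).mp hy
    subst hgi hgj hYi hYj
    rcases le_total i j with hij | hij
    · have h1 : (Y i).val ≤ (Y j).val := hY.1.monotone hij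
      have h2 : d i ≤ d j := hd.1 hij
      exact abs_helper (by exact_mod_cast h1) (by rw [hgval, hgval]; push_cast; omega)
        (by rw [hgval, hgval]; push_cast; omega)
    · have h1 : (Y j).val ≤ (Y i).val := hY.1.monotone hij
      have h2 : d j ≤ d i := hd.1 hij
      rw [abs_sub_comm, abs_sub_comm ((g i).val : ℤ)]
      exact abs_helper (by exact_mod_cast h1) (by rw [hgval, hgval]; push_cast; omega)
        (by rw [hgval, hgval]; push_cast; omega)
  · -- OrdPres
    intro x y a b hx hy hxy
    obtain ⟨i, hgi, hYi⟩ := (mk_eq_some hginj).mp hx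
    obtain ⟨j, hgj, hYj⟩ := (mk_eq_some hginj).mp hy
    subst hgi hgj hYi hYj
    exact hY.1.monotone (hg.le_iff_le.mp hxy)
  · -- OrdDecr
    intro x a hx
    obtain ⟨i, hgi, hYi⟩ := (mk_eq_some hginj).mp hx
    subst hgi hYi
    rw [Fin.le_def, hgval]
    omega
  · -- min
    rw [pim_mk hginj]
    refine min_eq_coe ?_ ?_
    · rw [← hY0]; exact Finset.mem_image_of_mem Y (Finset.mem_univ i0)
    · intro b hb'
      obtain ⟨j, -, rfl⟩ := Finset.mem_image.mp hb'
      rw [← hY0]; exact hY.1.monotone (h0le j)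
  · -- max im
    rw [pim_mk hginj]
    refine max_eq_coe ?_ ?_
    · rw [← hYl]; exact Finset.mem_image_of_mem Y (Finset.mem_univ il)
    · intro b hb'
      obtain ⟨j, -, rfl⟩ := Finset.mem_image.mp hb'
      rw [← hYl]; exact hY.1.monotone (hle_il j)
  · -- max dom
    rw [pdom_mk]
    have hgil : g il = lplus := by
      apply Fin.ext; rw [hgval, ← hdl, ← hYl]
    refine max_eq_coe ?_ ?_
    · rw [← hgil]; exact Finset.mem_image_of_mem g (Finset.mem_univ il)
    · intro b hb'
      obtain ⟨j, -, rfl⟩ := Finset.mem_image.mp hb'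
      rw [← hgil]; exact hg.monotone (hle_il j)
  · -- pfix
    have key : Finset.univ.filter (fun x => mk g Y x = some x) =
        Finset.image Y (Finset.univ.filter (fun i => d i = 0)) := by
      ext x
      simp only [Finset.mem_filter, Finset.mem_univ, true_and, Finset.mem_image]
      constructor
      · intro hx
        obtain ⟨i, hgi, hYi⟩ := (mk_eq_some hginj).mp hx
        have hd0 : d i = 0 := by
          have := congrArg Fin.val (hYi.trans hgi.symm)
          rw [hgval] at this; omega
        exact ⟨i, hd0, hYi⟩
      · rintro ⟨i, hd0, rfl⟩
        refine (mk_eq_some hginj).mpr ⟨i, ?_, rfl⟩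
        apply Fin.ext; rw [hgval, hd0]; omega
    rw [pfix, key, Finset.card_image_of_injective _ hY.1.injective]
    have : (Finset.univ.filter (fun i : Fin p => d i = 0)) =
        (Finset.univ.filter (fun i : Fin p => i.val < m)) := by
      ext i; simp [hd.2.1 i]
    rw [this, card_filter_lt hm]
  · -- pheight
    rw [pheight, pim_mk hginj, Finset.card_image_of_injective _ hY.1.injective,
      Finset.card_univ, Fintype.card_fin]

end ODCIaux
namespace ODCIaux

variable {n p m : ℕ} {kminus kplus lplus : Fin n}

lemma mkf_injective {Y Y' : Fin p → Fin n} {d d' : Fin p → ℕ}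
    {hb : ∀ i, (Y i).val + d i < n} {hb' : ∀ i, (Y' i).val + d' i < n}
    (hY : StrictMono Y) (hY' : StrictMono Y') (hd : Monotone d) (hd' : Monotone d')
    (heq : mk (mkg Y d hb) Y = mk (mkg Y' d' hb') Y') : Y = Y' ∧ d = d' := by
  have hg : StrictMono (mkg Y d hb) := mkg_strictMono hY hd
  have hg' : StrictMono (mkg Y' d' hb') := mkg_strictMono hY' hd'
  have him : Finset.image Y Finset.univ = Finset.image Y' Finset.univ := by
    rw [← pim_mk hg.injective, ← pim_mk hg'.injective, heq]
  have hdm : Finset.image (mkg Y d hb) Finset.univ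
      = Finset.image (mkg Y' d' hb') Finset.univ := by
    rw [← pdom_mk, ← pdom_mk, heq]
  have hcard : (Finset.image Y Finset.univ).card = p := by
    rw [Finset.card_image_of_injective _ hY.injective, Finset.card_univ, Fintype.card_fin]
  have hYY : Y = Y' := by
    have e1 := Finset.orderEmbOfFin_unique (f := Y) hcard
      (fun x => Finset.mem_image_of_mem Y (Finset.mem_univ x)) hY
    have e2 := Finset.orderEmbOfFin_unique (f := Y') hcard
      (fun x => by rw [him]; exact Finset.mem_image_of_mem Y' (Finset.mem_univ x)) hY'
    exact e1.trans e2.symm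
  have hcard2 : (Finset.image (mkg Y d hb) Finset.univ).card = p := by
    rw [Finset.card_image_of_injective _ hg.injective, Finset.card_univ, Fintype.card_fin]
  have hgg : mkg Y d hb = mkg Y' d' hb' := by
    have e1 := Finset.orderEmbOfFin_unique (f := mkg Y d hb) hcard2
      (fun x => Finset.mem_image_of_mem _ (Finset.mem_univ x)) hg
    have e2 := Finset.orderEmbOfFin_unique (f := mkg Y' d' hb') hcard2
      (fun x => by rw [hdm]; exact Finset.mem_image_of_mem _ (Finset.mem_univ x)) hg'
    exact e1.trans e2.symm
  refine ⟨hYY, funext fun i => ?_⟩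
  have h1 := congrArg Fin.val (congrFun hgg i)
  have h2 := congrArg Fin.val (congrFun hYY i)
  simp only [mkg] at h1
  omega

lemma card_pdom_eq {f : Fin n → Option (Fin n)} (hinj : PInj f) :
    (pdom f).card = (pim f).card := by
  refine Finset.card_bij (fun a ha => (f a).get (by
    simpa [pdom] using ha)) ?_ ?_ ?_
  · intro a ha
    simp only [pim, Finset.mem_filter, Finset.mem_univ, true_and]
    exact ⟨a, (Option.some_get _).symm⟩
  · intro a ha b hb h
    exact hinj a b _ ((Option.some_get _).symm.trans (congrArg some h))
      (Option.some_get _).symm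
  · intro b hbmem
    simp only [pim, Finset.mem_filter, Finset.mem_univ, true_and] at hbmem
    obtain ⟨x, hx⟩ := hbmem
    have hxd : x ∈ pdom f := by simp [pdom, hx]
    refine ⟨x, hxd, ?_⟩
    simp [Option.get_of_mem _ hx]

lemma exists_rep (hp : 2 ≤ p) (hm : m < p) {f : Fin n → Option (Fin n)}
    (hinj : PInj f) (hcontr : Contr f) (hpres : OrdPres f) (hdecr : OrdDecr f)
    (hmin : (pim f).min = (kminus : WithTop (Fin n)))
    (hmax : (pim f).max = (kplus : WithBot (Fin n)))
    (hdmax : (pdom f).max = (lplus : WithBot (Fin n)))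
    (hfix : pfix f = m) (hheight : pheight f = p) :
    ∃ (Y : Fin p → Fin n) (d : Fin p → ℕ) (hb : ∀ i, (Y i).val + d i < n),
      PY p kminus kplus Y ∧ Qd p m kplus lplus d ∧ mk (mkg Y d hb) Y = f := by
  have hp0 : 0 < p := by omega
  have hs : (pim f).card = p := hheight
  have ht : (pdom f).card = p := (card_pdom_eq hinj).trans hs
  set X : Fin p → Fin n := ⇑((pdom f).orderEmbOfFin ht) with hXdef
  have hXmono : StrictMono X := ((pdom f).orderEmbOfFin ht).strictMono
  have hXmem : ∀ i, X i ∈ pdom f := fun i => Finset.orderEmbOfFin_mem _ ht i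
  have hXsome : ∀ i, (f (X i)).isSome := fun i => by
    have := hXmem i; simpa [pdom] using this
  set Y : Fin p → Fin n := fun i => (f (X i)).get (hXsome i) with hYdef
  have hfXY : ∀ i, f (X i) = some (Y i) := fun i => (Option.some_get _).symm
  have hYmono : StrictMono Y := by
    intro i j hij
    have hle : Y i ≤ Y j := hpres (X i) (X j) _ _ (hfXY i) (hfXY j) (hXmono hij).le
    rcases lt_or_eq_of_le hle with h | h
    · exact h
    · exact absurd (hinj (X i) (X j) _ (hfXY i) (h ▸ hfXY j)) (hXmono hij).ne
  have hYmem : ∀ i, Y i ∈ pim f := fun i => by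
    simp only [pim, Finset.mem_filter, Finset.mem_univ, true_and]
    exact ⟨X i, hfXY i⟩
  have hYeq : Y = ⇑((pim f).orderEmbOfFin hs) :=
    Finset.orderEmbOfFin_unique hs hYmem hYmono
  have hne : (pim f).Nonempty := Finset.card_pos.mp (by omega)
  have htne : (pdom f).Nonempty := Finset.card_pos.mp (by omega)
  have hmin' : (pim f).min' hne = kminus := by
    have := Finset.coe_min' hne
    rw [hmin] at this
    exact_mod_cast this
  have hmax' : (pim f).max' hne = kplus := by
    have := Finset.coe_max' hne
    rw [hmax] at this
    exact_mod_cast this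
  have hdmax' : (pdom f).max' htne = lplus := by
    have := Finset.coe_max' htne
    rw [hdmax] at this
    exact_mod_cast this
  have hY0 : ∀ i : Fin p, i.val = 0 → Y i = kminus := by
    intro i hi
    have : i = ⟨0, hp0⟩ := Fin.ext hi
    rw [this, hYeq, ← hmin']
    exact Finset.orderEmbOfFin_zero hs hp0
  have hYl : ∀ i : Fin p, i.val = p - 1 → Y i = kplus := by
    intro i hi
    have : i = ⟨p - 1, by omega⟩ := Fin.ext hi
    rw [this, hYeq, ← hmax']
    exact Finset.orderEmbOfFin_last hs hp0
  have hXl : ∀ i : Fin p, i.val = p - 1 → X i = lplus := by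
    intro i hi
    have : i = ⟨p - 1, by omega⟩ := Fin.ext hi
    rw [this, hXdef, ← hdmax']
    exact Finset.orderEmbOfFin_last ht hp0
  have hYX : ∀ i, (Y i).val ≤ (X i).val := fun i => hdecr (X i) (Y i) (hfXY i)
  set d : Fin p → ℕ := fun i => (X i).val - (Y i).val with hddef
  have hXval : ∀ i, (X i).val = (Y i).val + d i := fun i => by
    have := hYX i; simp only [hddef]; omega
  have hdmono : Monotone d := by
    intro i j hij
    have habs := hcontr (X j) (X i) (Y j) (Y i) (hfXY j) (hfXY i)
    have h1 : (Y i).val ≤ (Y j).val := hYmono.monotone hij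
    have h2 : (X i).val ≤ (X j).val := hXmono.monotone hij
    rw [abs_of_nonneg (by push_cast; omega), abs_of_nonneg (by push_cast; omega)] at habs
    simp only [hddef]
    omega
  -- the zero set of d
  set S : Finset (Fin p) := Finset.univ.filter (fun i => d i = 0) with hSdef
  have hdc : ∀ i j : Fin p, j ≤ i → i ∈ S → j ∈ S := by
    intro i j hji hi
    simp only [hSdef, Finset.mem_filter, Finset.mem_univ, true_and] at hi ⊢
    have := hdmono hji
    omega
  have hScard : S.card = m := by
    rw [← hfix, pfix]
    refine Finset.card_bij (fun i _ => X i) ?_ ?_ ?_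
    · intro i hi
      simp only [hSdef, Finset.mem_filter, Finset.mem_univ, true_and] at hi
      simp only [Finset.mem_filter, Finset.mem_univ, true_and]
      have hXY : X i = Y i := Fin.ext (by rw [hXval, hi]; omega)
      have h5 := hfXY i
      rw [← hXY] at h5
      exact h5
    · intro i _ j _ h
      exact hXmono.injective h
    · intro x hx
      simp only [Finset.mem_filter, Finset.mem_univ, true_and] at hx
      have hxd : x ∈ pdom f := by simp [pdom, hx]
      have hxr : ∃ i, X i = x := by
        have := Finset.range_orderEmbOfFin (pdom f) ht
        rw [← hXdef] at this
        have : x ∈ Set.range X := by rw [this]; exact_mod_cast hxd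
        exact this
      obtain ⟨i, hi⟩ := hxr
      refine ⟨i, ?_, hi⟩
      simp only [hSdef, Finset.mem_filter, Finset.mem_univ, true_and]
      have h5 : Y i = x := by
        have h1 := hfXY i
        rw [hi, hx] at h1
        exact (Option.some_inj.mp h1).symm
      have h4 := hXval i
      rw [hi, h5] at h4
      omega
  have hdzero : ∀ i : Fin p, d i = 0 ↔ i.val < m := by
    intro i
    rw [← hScard]
    have := mem_iff_lt_card_of_dc hdc i
    simp only [hSdef, Finset.mem_filter, Finset.mem_univ, true_and] at this
    exact this
  have hdlast : ∀ i : Fin p, i.val = p - 1 → kplus.val + d i = lplus.val := by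
    intro i hi
    have h1 := hXl i hi
    have h2 := hYl i hi
    have h3 := hYX i
    have h4 := hXval i
    rw [h1, h2] at h4
    omega
  have hb : ∀ i, (Y i).val + d i < n := fun i => by
    rw [← hXval]; exact (X i).isLt
  refine ⟨Y, d, hb, ⟨hYmono, hY0, hYl⟩, ⟨hdmono, hdzero, hdlast⟩, ?_⟩
  have hgX : mkg Y d hb = X := by
    funext i
    exact Fin.ext (hXval i).symm
  have hginj : Function.Injective (mkg Y d hb) := by
    rw [hgX]; exact hXmono.injective
  funext x
  cases hfx : f x with
  | none =>
    rw [← Option.not_isSome_iff_eq_none]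
    intro hsome
    rw [mk_isSome_iff] at hsome
    obtain ⟨i, hi⟩ := hsome
    rw [hgX] at hi
    have := hXsome i
    rw [hi, hfx] at this
    simp at this
  | some a =>
    have hxd : x ∈ pdom f := by simp [pdom, hfx]
    have hxr : ∃ i, X i = x := by
      have hrange := Finset.range_orderEmbOfFin (pdom f) ht
      rw [← hXdef] at hrange
      have : x ∈ Set.range X := by rw [hrange]; exact_mod_cast hxd
      exact this
    obtain ⟨i, hi⟩ := hxr
    have hfa : Y i = a := by
      have h1 := hfXY i
      rw [hi, hfx] at h1
      exact Option.some_inj.mp h1.symm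
    exact (mk_eq_some hginj).mpr ⟨i, by rw [hgX, hi], hfa⟩

end ODCIaux
namespace ODCIaux

lemma image_orderEmbOfFin {α : Type*} [LinearOrder α] [DecidableEq α] (s : Finset α) {k : ℕ}
    (h : s.card = k) : Finset.image ⇑(s.orderEmbOfFin h) Finset.univ = s := by
  apply Finset.coe_injective
  rw [Finset.coe_image, Finset.coe_univ, Set.image_univ, Finset.range_orderEmbOfFin]

lemma strictMono_image_eq {p : ℕ} {α : Type*} [LinearOrder α] [DecidableEq α] {Y Y' : Fin p → α}
    (hY : StrictMono Y) (hY' : StrictMono Y')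
    (h : Finset.image Y Finset.univ = Finset.image Y' Finset.univ) : Y = Y' := by
  have hcard : (Finset.image Y Finset.univ).card = p := by
    rw [Finset.card_image_of_injective _ hY.injective, Finset.card_univ, Fintype.card_fin]
  have e1 := Finset.orderEmbOfFin_unique (f := Y) hcard
    (fun x => Finset.mem_image_of_mem Y (Finset.mem_univ x)) hY
  have e2 := Finset.orderEmbOfFin_unique (f := Y') hcard
    (fun x => by rw [h]; exact Finset.mem_image_of_mem Y' (Finset.mem_univ x)) hY'
  exact e1.trans e2.symm

variable {n p m : ℕ} {kminus kplus lplus : Fin n}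

lemma cardY (hp : 2 ≤ p) (hkk : kminus < kplus) :
    Nat.card {Y : Fin p → Fin n // PY p kminus kplus Y} =
      (kplus.val - kminus.val - 1).choose (p - 2) := by
  have key : Nat.card {Y : Fin p → Fin n // PY p kminus kplus Y} =
      Nat.card {S // S ∈ (Finset.Ioo kminus kplus).powersetCard (p - 2)} := by
    apply Nat.card_eq_of_bijective
      (fun Y => ⟨Finset.image Y.val Finset.univ ∩ Finset.Ioo kminus kplus, by
        obtain ⟨Y, hY⟩ := Y
        rw [Finset.mem_powersetCard]
        refine ⟨Finset.inter_subset_right, ?_⟩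
        have hi0 : (0 : ℕ) < p := by omega
        have hil : p - 1 < p := by omega
        have hkey : Finset.image Y Finset.univ ∩ Finset.Ioo kminus kplus =
            Finset.image Y (Finset.univ \ {(⟨0, hi0⟩ : Fin p), ⟨p - 1, hil⟩}) := by
          ext b
          simp only [Finset.mem_inter, Finset.mem_image, Finset.mem_Ioo, Finset.mem_sdiff,
            Finset.mem_univ, true_and, Finset.mem_insert, Finset.mem_singleton]
          constructor
          · rintro ⟨⟨i, -, rfl⟩, h1, h2⟩
            refine ⟨i, ?_, rfl⟩
            push_neg
            refine ⟨?_, ?_⟩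
            · rintro rfl
              rw [hY.2.1 _ rfl] at h1
              exact lt_irrefl _ h1
            · rintro rfl
              rw [hY.2.2 _ rfl] at h2
              exact lt_irrefl _ h2
          · rintro ⟨i, hi, rfl⟩
            push_neg at hi
            refine ⟨⟨i, rfl⟩, ?_, ?_⟩
            · rw [← hY.2.1 ⟨0, hi0⟩ rfl]
              refine hY.1 ?_
              rw [Fin.lt_def]
              have h3 : (⟨0, hi0⟩ : Fin p).val = 0 := rfl
              have h4 : i.val ≠ 0 := fun h => hi.1 (Fin.ext h)
              omega
            · rw [← hY.2.2 ⟨p - 1, hil⟩ rfl]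
              refine hY.1 ?_
              rw [Fin.lt_def]
              have h3 : (⟨p - 1, hil⟩ : Fin p).val = p - 1 := rfl
              have h1 : i.val ≤ p - 1 := Nat.le_sub_one_of_lt i.isLt
              have h2 : i.val ≠ p - 1 := fun h => hi.2 (Fin.ext h)
              omega
        rw [hkey, Finset.card_image_of_injective _ hY.1.injective, Finset.card_sdiff_of_subset
          (by intro x _; exact Finset.mem_univ x)]
        rw [Finset.card_univ, Fintype.card_fin]
        rw [Finset.card_insert_of_notMem (by
          simp only [Finset.mem_singleton]
          intro h
          have h2 : (0 : ℕ) = p - 1 := congrArg Fin.val h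
          omega), Finset.card_singleton]⟩)
      ?_
    constructor
    · rintro ⟨Y, hY⟩ ⟨Y', hY'⟩ h
      simp only [Subtype.mk.injEq] at h ⊢
      have him : Finset.image Y Finset.univ = Finset.image Y' Finset.univ := by
        have expand : ∀ (Z : Fin p → Fin n), PY p kminus kplus Z →
            Finset.image Z Finset.univ =
            insert kminus (insert kplus (Finset.image Z Finset.univ ∩
              Finset.Ioo kminus kplus)) := by
          intro Z hZ
          have hi0 : (0 : ℕ) < p := by omega
          have hil : p - 1 < p := by omega
          ext b
          simp only [Finset.mem_insert, Finset.mem_inter, Finset.mem_Ioo, Finset.mem_image]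
          constructor
          · rintro ⟨i, -, rfl⟩
            have hle1 : kminus ≤ Z i := by
              rw [← hZ.2.1 ⟨0, hi0⟩ rfl]
              refine hZ.1.monotone ?_
              rw [Fin.le_def]
              exact Nat.zero_le _
            have hle2 : Z i ≤ kplus := by
              rw [← hZ.2.2 ⟨p - 1, hil⟩ rfl]
              refine hZ.1.monotone ?_
              rw [Fin.le_def]
              exact Nat.le_sub_one_of_lt i.isLt
            rcases eq_or_lt_of_le hle1 with h1 | h1
            · exact Or.inl h1.symm
            rcases eq_or_lt_of_le hle2 with h2 | h2
            · exact Or.inr (Or.inl h2)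
            · exact Or.inr (Or.inr ⟨⟨i, Finset.mem_univ i, rfl⟩, h1, h2⟩)
          · rintro (rfl | rfl | ⟨⟨i, -, rfl⟩, -, -⟩)
            · exact ⟨⟨0, hi0⟩, Finset.mem_univ _, hZ.2.1 _ rfl⟩
            · exact ⟨⟨p - 1, hil⟩, Finset.mem_univ _, hZ.2.2 _ rfl⟩
            · exact ⟨i, Finset.mem_univ i, rfl⟩
        rw [expand Y hY, expand Y' hY', h]
      exact strictMono_image_eq hY.1 hY'.1 him
    · rintro ⟨S, hS⟩
      rw [Finset.mem_powersetCard] at hS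
      obtain ⟨hSsub, hScard⟩ := hS
      set s : Finset (Fin n) := insert kminus (insert kplus S) with hsdef
      have hkpS : kplus ∉ S := fun h => absurd (Finset.mem_Ioo.mp (hSsub h)).2 (lt_irrefl _)
      have hkmS : kminus ∉ insert kplus S := by
        simp only [Finset.mem_insert]
        rintro (h | h)
        · exact absurd h hkk.ne
        · exact absurd (Finset.mem_Ioo.mp (hSsub h)).1 (lt_irrefl _)
      have hscard : s.card = p := by
        rw [hsdef, Finset.card_insert_of_notMem hkmS, Finset.card_insert_of_notMem hkpS,
          hScard]
        omega
      set Y : Fin p → Fin n := ⇑(s.orderEmbOfFin hscard) with hYdef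
      have hYmono : StrictMono Y := (s.orderEmbOfFin hscard).strictMono
      have hmem : ∀ b ∈ s, kminus ≤ b ∧ b ≤ kplus := by
        intro b hb
        rw [hsdef] at hb
        simp only [Finset.mem_insert] at hb
        rcases hb with rfl | rfl | hb
        · exact ⟨le_refl _, hkk.le⟩
        · exact ⟨hkk.le, le_refl _⟩
        · have := Finset.mem_Ioo.mp (hSsub hb)
          exact ⟨this.1.le, this.2.le⟩
      have hkms : kminus ∈ s := by rw [hsdef]; exact Finset.mem_insert_self _ _
      have hkps : kplus ∈ s := by
        rw [hsdef]
        exact Finset.mem_insert_of_mem (Finset.mem_insert_self _ _)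
      have hsne : s.Nonempty := ⟨kminus, hkms⟩
      have hmin' : s.min' hsne = kminus :=
        le_antisymm (Finset.min'_le s kminus hkms)
          (Finset.le_min' s hsne kminus (fun b hb => (hmem b hb).1))
      have hmax' : s.max' hsne = kplus :=
        le_antisymm (Finset.max'_le s hsne kplus (fun b hb => (hmem b hb).2))
          (Finset.le_max' s kplus hkps)
      have hPY : PY p kminus kplus Y := by
        refine ⟨hYmono, ?_, ?_⟩
        · intro i hi
          have : i = ⟨0, by omega⟩ := Fin.ext hi
          rw [this, hYdef]
          exact (Finset.orderEmbOfFin_zero hscard (by omega)).trans hmin'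
        · intro i hi
          have : i = ⟨p - 1, by omega⟩ := Fin.ext hi
          rw [this, hYdef]
          exact (Finset.orderEmbOfFin_last hscard (by omega)).trans hmax'
      refine ⟨⟨Y, hPY⟩, ?_⟩
      simp only [Subtype.mk.injEq]
      rw [hYdef, image_orderEmbOfFin]
      ext b
      simp only [Finset.mem_inter, hsdef, Finset.mem_insert, Finset.mem_Ioo]
      constructor
      · rintro ⟨rfl | rfl | hb, h1, h2⟩
        · exact absurd h1 (lt_irrefl _)
        · exact absurd h2 (lt_irrefl _)
        · exact hb
      · intro hb
        have := Finset.mem_Ioo.mp (hSsub hb)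
        exact ⟨Or.inr (Or.inr hb), this.1, this.2⟩
  rw [key, Nat.card_eq_finsetCard, Finset.card_powersetCard, Fin.card_Ioo]

end ODCIaux
namespace ODCIaux

/-- The strictly increasing sequence extracted from the nonzero part of `d`. -/
def emap (p m : ℕ) (d : Fin p → ℕ) : Fin (p - m - 1) → ℕ :=
  fun j => d ⟨m + j.val, by have := j.isLt; omega⟩ + j.val

variable {n p m : ℕ} {kminus kplus lplus : Fin n}

lemma emap_strictMono {d : Fin p → ℕ} (hd : Monotone d) : StrictMono (emap p m d) := by
  intro j j' hjj
  have h1 : d ⟨m + j.val, by have := j.isLt; omega⟩ ≤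
      d ⟨m + j'.val, by have := j'.isLt; omega⟩ := by
    refine hd ?_
    rw [Fin.le_def]
    have := hjj.le
    rw [Fin.le_def] at this
    simp only []
    omega
  have h2 : j.val < j'.val := hjj
  simp only [emap]
  omega

lemma emap_mem (hm : m < p) (hkl : kplus < lplus) {d : Fin p → ℕ}
    (hd : Qd p m kplus lplus d) (j : Fin (p - m - 1)) :
    emap p m d j ∈ Finset.Icc 1 (lplus.val - kplus.val + (p - m - 1) - 1) := by
  have hjlt := j.isLt
  have hil : p - 1 < p := by omega
  have hdD : d ⟨p - 1, hil⟩ = lplus.val - kplus.val := by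
    have h1 := hd.2.2 ⟨p - 1, hil⟩ rfl
    have h2 : kplus.val < lplus.val := hkl
    omega
  have hne : ¬ (m + j.val < m) := by omega
  have hnz : d ⟨m + j.val, by omega⟩ ≠ 0 := fun h => hne ((hd.2.1 _).mp h)
  have hle : d ⟨m + j.val, by omega⟩ ≤ d ⟨p - 1, hil⟩ := by
    refine hd.1 ?_
    rw [Fin.le_def]
    simp only []
    omega
  rw [Finset.mem_Icc]
  simp only [emap]
  omega

lemma qd_eq_of_emap_eq (hm : m < p) (hkl : kplus < lplus) {d d' : Fin p → ℕ}
    (hd : Qd p m kplus lplus d) (hd' : Qd p m kplus lplus d')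
    (h : emap p m d = emap p m d') : d = d' := by
  funext i
  by_cases h1 : i.val < m
  · rw [(hd.2.1 i).mpr h1, (hd'.2.1 i).mpr h1]
  by_cases h2 : i.val < p - 1
  · have hj : i.val - m < p - m - 1 := by omega
    have hcong := congrFun h ⟨i.val - m, hj⟩
    simp only [emap] at hcong
    have hidx : (⟨m + (i.val - m), by omega⟩ : Fin p) = i := Fin.ext (by simp only []; omega)
    rw [hidx] at hcong
    omega
  · have hi : i.val = p - 1 := by have := i.isLt; omega
    have e1 := hd.2.2 i hi
    have e2 := hd'.2.2 i hi
    omega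

lemma cardD (hp : 2 ≤ p) (hm : m < p) (hkl : kplus < lplus) :
    Nat.card {d : Fin p → ℕ // Qd p m kplus lplus d} =
      (lplus.val - kplus.val + (p - m - 1) - 1).choose (p - m - 1) := by
  have hD1 : 1 ≤ lplus.val - kplus.val := by
    have : kplus.val < lplus.val := hkl
    omega
  have key : Nat.card {d : Fin p → ℕ // Qd p m kplus lplus d} =
      Nat.card {S // S ∈ (Finset.Icc 1 (lplus.val - kplus.val + (p - m - 1) - 1)).powersetCard
        (p - m - 1)} := by
    apply Nat.card_eq_of_bijective (fun d => ⟨Finset.image (emap p m d.val) Finset.univ, by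
      rw [Finset.mem_powersetCard]
      constructor
      · intro b hb
        obtain ⟨j, -, rfl⟩ := Finset.mem_image.mp hb
        exact emap_mem hm hkl d.prop j
      · rw [Finset.card_image_of_injective _ (emap_strictMono d.prop.1).injective,
          Finset.card_univ, Fintype.card_fin]⟩)
    constructor
    · rintro ⟨d, hd⟩ ⟨d', hd'⟩ hEq
      simp only [Subtype.mk.injEq] at hEq ⊢
      exact qd_eq_of_emap_eq hm hkl hd hd'
        (strictMono_image_eq (emap_strictMono hd.1) (emap_strictMono hd'.1) hEq)
    · rintro ⟨S, hS⟩
      rw [Finset.mem_powersetCard] at hS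
      obtain ⟨hSsub, hScard⟩ := hS
      set e : Fin (p - m - 1) → ℕ := ⇑(S.orderEmbOfFin hScard) with hedef
      have hemono : StrictMono e := (S.orderEmbOfFin hScard).strictMono
      have hemem : ∀ j, 1 ≤ e j ∧ e j ≤ lplus.val - kplus.val + (p - m - 1) - 1 := by
        intro j
        have := hSsub (Finset.orderEmbOfFin_mem S hScard j)
        rw [Finset.mem_Icc] at this
        exact this
      have hgap : ∀ i j : Fin (p - m - 1), i ≤ j → e i + (j.val - i.val) ≤ e j :=
        strictMono_gap hemono
      have hlow : ∀ j : Fin (p - m - 1), j.val + 1 ≤ e j := by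
        intro j
        have h0 : (0 : ℕ) < p - m - 1 := by have := j.isLt; omega
        have := hgap ⟨0, h0⟩ j (by rw [Fin.le_def]; exact Nat.zero_le _)
        have h1 := (hemem ⟨0, h0⟩).1
        simp only [] at this
        omega
      have hhigh : ∀ j : Fin (p - m - 1), e j + (p - m - 1 - 1 - j.val) ≤
          lplus.val - kplus.val + (p - m - 1) - 1 := by
        intro j
        have hr : p - m - 1 - 1 < p - m - 1 := by have := j.isLt; omega
        have hle : j ≤ (⟨p - m - 1 - 1, hr⟩ : Fin (p - m - 1)) := by
          rw [Fin.le_def]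
          exact Nat.le_sub_one_of_lt j.isLt
        have h1 := hgap j ⟨p - m - 1 - 1, hr⟩ hle
        have h2 := (hemem ⟨p - m - 1 - 1, hr⟩).2
        have h3 : ((⟨p - m - 1 - 1, hr⟩ : Fin (p - m - 1)) : ℕ) = p - m - 1 - 1 := rfl
        omega
      set d : Fin p → ℕ := fun i =>
        if h2 : i.val < m then 0
        else if h3 : i.val < p - 1 then
          e ⟨i.val - m, by omega⟩ - (i.val - m)
        else lplus.val - kplus.val with hddef
      have hd0 : ∀ i : Fin p, i.val < m → d i = 0 := by
        intro i h
        simp only [hddef, dif_pos h]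
      have hdmid : ∀ (i : Fin p) (j' : Fin (p - m - 1)), i.val = m + j'.val →
          i.val < p - 1 → d i = e j' - j'.val := by
        intro i j' hij h3
        have h2 : ¬ i.val < m := by omega
        simp only [hddef, dif_neg h2, dif_pos h3]
        congr 2
        · exact Fin.ext (by simp only []; omega)
        · omega
      have hdlast : ∀ i : Fin p, i.val = p - 1 → d i = lplus.val - kplus.val := by
        intro i h
        have h2 : ¬ i.val < m := by omega
        have h3 : ¬ i.val < p - 1 := by omega
        simp only [hddef, dif_neg h2, dif_neg h3]
      have hQd : Qd p m kplus lplus d := by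
        refine ⟨?_, ?_, ?_⟩
        · intro i j hij
          rw [Fin.le_def] at hij
          by_cases h1 : i.val < m
          · rw [hd0 i h1]; exact Nat.zero_le _
          have h1j : ¬ j.val < m := by omega
          by_cases h2 : i.val < p - 1
          · have ha : i.val - m < p - m - 1 := by omega
            have hva : ((⟨i.val - m, ha⟩ : Fin (p - m - 1)) : ℕ) = i.val - m := rfl
            rw [hdmid i ⟨i.val - m, ha⟩ (show i.val = m + (i.val - m) by omega) h2]
            have hl := hlow ⟨i.val - m, ha⟩
            by_cases h3 : j.val < p - 1
            · have hb : j.val - m < p - m - 1 := by omega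
              have hvb : ((⟨j.val - m, hb⟩ : Fin (p - m - 1)) : ℕ) = j.val - m := rfl
              rw [hdmid j ⟨j.val - m, hb⟩ (show j.val = m + (j.val - m) by omega) h3]
              have hg := hgap ⟨i.val - m, ha⟩ ⟨j.val - m, hb⟩
                (by rw [Fin.le_def, hva]; omega)
              omega
            · have hj : j.val = p - 1 := by have := j.isLt; omega
              rw [hdlast j hj]
              have hh := hhigh ⟨i.val - m, ha⟩
              omega
          · have hi : i.val = p - 1 := by have := i.isLt; omega
            have hj : j.val = p - 1 := by have := j.isLt; omega
            rw [hdlast i hi, hdlast j hj]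
        · intro i
          by_cases h1 : i.val < m
          · rw [hd0 i h1]; simp [h1]
          by_cases h2 : i.val < p - 1
          · have ha : i.val - m < p - m - 1 := by omega
            have hva : ((⟨i.val - m, ha⟩ : Fin (p - m - 1)) : ℕ) = i.val - m := rfl
            rw [hdmid i ⟨i.val - m, ha⟩ (show i.val = m + (i.val - m) by omega) h2]
            have hl := hlow ⟨i.val - m, ha⟩
            omega
          · have hi : i.val = p - 1 := by have := i.isLt; omega
            rw [hdlast i hi]
            omega
        · intro i hi
          rw [hdlast i hi]
          omega
      refine ⟨⟨d, hQd⟩, ?_⟩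
      simp only [Subtype.mk.injEq]
      have heq : emap p m d = e := by
        funext j
        have hj := j.isLt
        have h6 : d ⟨m + j.val, by omega⟩ = e j - j.val :=
          hdmid _ j rfl (by simp only []; omega)
        simp only [emap]
        rw [h6]
        have := hlow j
        omega
      rw [heq, hedef, image_orderEmbOfFin]
  rw [key, Nat.card_eq_finsetCard, Finset.card_powersetCard, Nat.card_Icc]
  have harith : lplus.val - kplus.val + (p - m - 1) - 1 + 1 - 1 =
      lplus.val - kplus.val + (p - m - 1) - 1 := by omega
  rw [harith]

end ODCIaux
namespace ODCIaux

variable {n p m : ℕ} {kminus kplus lplus : Fin n}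

lemma main_count (hp : 2 ≤ p) (hm : m < p) (hkk : kminus < kplus) (hkl : kplus < lplus) :
    Nat.card {f : Fin n → Option (Fin n) //
        PInj f ∧ Contr f ∧ OrdPres f ∧ OrdDecr f ∧
        (pim f).min = (kminus : WithTop (Fin n)) ∧
        (pim f).max = (kplus : WithBot (Fin n)) ∧
        (pdom f).max = (lplus : WithBot (Fin n)) ∧
        pfix f = m ∧ pheight f = p} =
      (lplus.val - kplus.val + (p - m - 1) - 1).choose (p - m - 1) *
      (kplus.val - kminus.val - 1).choose (p - 2) := by
  have hbij : Function.Bijective (fun Yd : {Y : Fin p → Fin n // PY p kminus kplus Y} ×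
      {d : Fin p → ℕ // Qd p m kplus lplus d} =>
      (⟨mk (mkg Yd.1.val Yd.2.val (bound_of (by omega) Yd.1.prop Yd.2.prop)) Yd.1.val,
        mkf_prop hp hm Yd.1.prop Yd.2.prop _⟩ : {f : Fin n → Option (Fin n) //
        PInj f ∧ Contr f ∧ OrdPres f ∧ OrdDecr f ∧
        (pim f).min = (kminus : WithTop (Fin n)) ∧
        (pim f).max = (kplus : WithBot (Fin n)) ∧
        (pdom f).max = (lplus : WithBot (Fin n)) ∧
        pfix f = m ∧ pheight f = p})) := by
    constructor
    · rintro ⟨⟨Y, hY⟩, ⟨d, hd⟩⟩ ⟨⟨Y', hY'⟩, ⟨d', hd'⟩⟩ h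
      simp only [Subtype.mk.injEq] at h
      obtain ⟨h1, h2⟩ := mkf_injective hY.1 hY'.1 hd.1 hd'.1 h
      simp only [Prod.mk.injEq, Subtype.mk.injEq]
      exact ⟨h1, h2⟩
    · rintro ⟨f, hinj, hcontr, hpres, hdecr, hmin, hmax, hdmax, hfix, hheight⟩
      obtain ⟨Y, d, hb, hY, hd, heq⟩ :=
        exists_rep hp hm hinj hcontr hpres hdecr hmin hmax hdmax hfix hheight
      refine ⟨⟨⟨Y, hY⟩, ⟨d, hd⟩⟩, ?_⟩
      simp only [Subtype.mk.injEq]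
      exact heq
  rw [← Nat.card_eq_of_bijective _ hbij, Nat.card_prod, cardY hp hkk, cardD hp hm hkl]
  ring

lemma empty_A (hp : 2 ≤ p) (hkk : ¬ kminus < kplus)
    {f : Fin n → Option (Fin n)}
    (hmin : (pim f).min = (kminus : WithTop (Fin n)))
    (hmax : (pim f).max = (kplus : WithBot (Fin n)))
    (hheight : pheight f = p) : False := by
  have hcard : (pim f).card = p := hheight
  have hne : (pim f).Nonempty := Finset.card_pos.mp (by omega)
  have hmin' : (pim f).min' hne = kminus := by
    have := Finset.coe_min' hne
    rw [hmin] at this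
    exact_mod_cast this
  have hmax' : (pim f).max' hne = kplus := by
    have := Finset.coe_max' hne
    rw [hmax] at this
    exact_mod_cast this
  have := Finset.min'_lt_max'_of_card (pim f) (by omega)
  rw [hmin', hmax'] at this
  exact hkk this

lemma empty_B (hp : 2 ≤ p) (hm : m < p) (hkl : ¬ kplus < lplus)
    {f : Fin n → Option (Fin n)}
    (hinj : PInj f) (hcontr : Contr f) (hdecr : OrdDecr f)
    (hmax : (pim f).max = (kplus : WithBot (Fin n)))
    (hdmax : (pdom f).max = (lplus : WithBot (Fin n)))
    (hfix : pfix f = m) (hheight : pheight f = p) : False := by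
  have hkp_mem : kplus ∈ pim f := Finset.mem_of_max hmax
  have hlp_mem : lplus ∈ pdom f := Finset.mem_of_max hdmax
  obtain ⟨x, hx⟩ : ∃ x, f x = some kplus := by
    simpa [pim] using hkp_mem
  have hxk : kplus ≤ x := hdecr x kplus hx
  have hxd : x ∈ pdom f := by simp [pdom, hx]
  have hxl : x ≤ lplus := by
    have := Finset.le_max hxd
    rw [hdmax] at this
    exact_mod_cast this
  have hlk : lplus ≤ kplus := not_lt.mp hkl
  have hxeq : x = kplus := le_antisymm (hxl.trans hlk) hxk
  have hfixall : ∀ y, y ∈ pdom f → f y = some y := by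
    intro y hy
    have hys : (f y).isSome := by simpa [pdom] using hy
    obtain ⟨b, hb⟩ := Option.isSome_iff_exists.mp hys
    have hbim : b ∈ pim f := by
      simp only [pim, Finset.mem_filter, Finset.mem_univ, true_and]
      exact ⟨y, hb⟩
    have hbk : b ≤ kplus := by
      have := Finset.le_max hbim
      rw [hmax] at this
      exact_mod_cast this
    have hyl : y ≤ lplus := by
      have := Finset.le_max hy
      rw [hdmax] at this
      exact_mod_cast this
    have hby : b ≤ y := hdecr y b hb
    have habs := hcontr x y kplus b hx hb
    rw [hxeq] at habs
    have h1 : (b.val : ℤ) ≤ kplus.val := by exact_mod_cast hbk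
    have h2 : (y.val : ℤ) ≤ kplus.val := by
      have : y.val ≤ lplus.val := hyl
      have h3 : lplus.val ≤ kplus.val := hlk
      omega
    rw [abs_of_nonneg (by omega), abs_of_nonneg (by omega)] at habs
    have hyb : y ≤ b := by
      rw [Fin.le_def]
      omega
    rw [hb, le_antisymm hby hyb]
  have hpdfix : Finset.univ.filter (fun x => f x = some x) = pdom f := by
    ext z
    simp only [Finset.mem_filter, Finset.mem_univ, true_and, pdom]
    constructor
    · intro h; simp [h]
    · intro h
      exact hfixall z (by simpa [pdom] using h)
  have : pfix f = p := by
    rw [pfix, hpdfix, card_pdom_eq hinj, ← pheight, hheight]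
  omega

end ODCIaux

/-- The number of elements of `ODCI_n` with prescribed left waist `k⁻`, right waist
`k⁺`, right shoulder `l⁺`, exactly `m < p` fixed points and height `p ≥ 2` equals
`C(l⁺-k⁺+p-m-2, p-m-1)·C(k⁺-k⁻-1, p-2)`. -/
theorem ODCI_count_waists_shoulder_fix (n p m : ℕ) (hn : 1 ≤ n) (hp : 2 ≤ p)
    (hm : m < p) (kminus kplus lplus : Fin n) :
    Nat.card {f : Fin n → Option (Fin n) //
        PInj f ∧ Contr f ∧ OrdPres f ∧ OrdDecr f ∧
        (pim f).min = (kminus : WithTop (Fin n)) ∧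
        (pim f).max = (kplus : WithBot (Fin n)) ∧
        (pdom f).max = (lplus : WithBot (Fin n)) ∧
        pfix f = m ∧ pheight f = p} =
      ichoose ((lplus.val : ℤ) - (kplus.val : ℤ) + (p : ℤ) - (m : ℤ) - 2)
          ((p : ℤ) - (m : ℤ) - 1) *
      ichoose ((kplus.val : ℤ) - (kminus.val : ℤ) - 1) ((p : ℤ) - 2) := by
  by_cases hkk : kminus < kplus
  · by_cases hkl : kplus < lplus
    · rw [ODCIaux.main_count hp hm hkk hkl]
      have hkkv : kminus.val < kplus.val := hkk
      have hklv : kplus.val < lplus.val := hkl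
      have h1 : ichoose ((lplus.val : ℤ) - (kplus.val : ℤ) + (p : ℤ) - (m : ℤ) - 2)
          ((p : ℤ) - (m : ℤ) - 1) =
          (lplus.val - kplus.val + (p - m - 1) - 1).choose (p - m - 1) := by
        unfold ichoose
        rw [if_pos (by constructor <;> omega)]
        have e1 : ((lplus.val : ℤ) - (kplus.val : ℤ) + (p : ℤ) - (m : ℤ) - 2).toNat =
            lplus.val - kplus.val + (p - m - 1) - 1 := by omega
        have e2 : ((p : ℤ) - (m : ℤ) - 1).toNat = p - m - 1 := by omega
        rw [e1, e2]
      have h2 : ichoose ((kplus.val : ℤ) - (kminus.val : ℤ) - 1) ((p : ℤ) - 2) =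
          (kplus.val - kminus.val - 1).choose (p - 2) := by
        unfold ichoose
        by_cases hba : (p : ℤ) - 2 ≤ (kplus.val : ℤ) - (kminus.val : ℤ) - 1
        · rw [if_pos (by constructor <;> omega)]
          have e1 : ((kplus.val : ℤ) - (kminus.val : ℤ) - 1).toNat =
              kplus.val - kminus.val - 1 := by omega
          have e2 : ((p : ℤ) - 2).toNat = p - 2 := by omega
          rw [e1, e2]
        · rw [if_neg (by intro h; exact hba h.2)]
          symm
          exact Nat.choose_eq_zero_of_lt (by omega)
      rw [h1, h2]
    · have hempty : IsEmpty {f : Fin n → Option (Fin n) //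
          PInj f ∧ Contr f ∧ OrdPres f ∧ OrdDecr f ∧
          (pim f).min = (kminus : WithTop (Fin n)) ∧
          (pim f).max = (kplus : WithBot (Fin n)) ∧
          (pdom f).max = (lplus : WithBot (Fin n)) ∧
          pfix f = m ∧ pheight f = p} := by
        refine ⟨?_⟩
        rintro ⟨f, hinj, hcontr, hpres, hdecr, hmin, hmax, hdmax, hfix, hheight⟩
        exact ODCIaux.empty_B hp hm hkl hinj hcontr hdecr hmax hdmax hfix hheight
      rw [Nat.card_of_isEmpty]
      have : ichoose ((lplus.val : ℤ) - (kplus.val : ℤ) + (p : ℤ) - (m : ℤ) - 2)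
          ((p : ℤ) - (m : ℤ) - 1) = 0 := by
        unfold ichoose
        rw [if_neg]
        intro h
        have hlk : lplus.val ≤ kplus.val := by
          have : ¬ kplus.val < lplus.val := hkl
          omega
        have := h.1
        have := h.2
        omega
      rw [this, zero_mul]
  · have hempty : IsEmpty {f : Fin n → Option (Fin n) //
        PInj f ∧ Contr f ∧ OrdPres f ∧ OrdDecr f ∧
        (pim f).min = (kminus : WithTop (Fin n)) ∧
        (pim f).max = (kplus : WithBot (Fin n)) ∧
        (pdom f).max = (lplus : WithBot (Fin n)) ∧
        pfix f = m ∧ pheight f = p} := by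
      refine ⟨?_⟩
      rintro ⟨f, hinj, hcontr, hpres, hdecr, hmin, hmax, hdmax, hfix, hheight⟩
      exact ODCIaux.empty_A hp hkk hmin hmax hheight
    rw [Nat.card_of_isEmpty]
    have : ichoose ((kplus.val : ℤ) - (kminus.val : ℤ) - 1) ((p : ℤ) - 2) = 0 := by
      unfold ichoose
      rw [if_neg]
      intro h
      have hlk : kplus.val ≤ kminus.val := by
        have : ¬ kminus.val < kplus.val := hkk
        omega
      have := h.1
      have := h.2
      omega
    rw [this, mul_zero]
end

section
/- Let F(n;p,m) denote the number of elements α ∈ ODCI_n with height h(α) = p and exactly m fixed points. If m = p, then F(n;p,m) = C(n,p). If m < p, then F(n;p,m) = C(n+p−m−1, 2p−m). -/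
open Finset

namespace ODCIAux

variable {n p m : ℕ}

lemma fin_gap_aux {k l : ℕ} {f : Fin k → Fin l} (hf : StrictMono f) :
    ∀ d : ℕ, ∀ i j : Fin k, (j : ℕ) = (i : ℕ) + d → (f i : ℕ) + d ≤ (f j : ℕ) := by
  intro d
  induction d with
  | zero =>
      intro i j h
      have : i = j := Fin.ext (by omega)
      subst this; omega
  | succ d ih =>
      intro i j h
      have hlt : ((i : ℕ) + d) < k := by omega
      have h1 := ih i ⟨(i : ℕ) + d, hlt⟩ rfl
      have h2 : f ⟨(i : ℕ) + d, hlt⟩ < f j := hf (by rw [Fin.lt_def]; simp; omega)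
      rw [Fin.lt_def] at h2
      omega

lemma fin_gap {k l : ℕ} {f : Fin k → Fin l} (hf : StrictMono f)
    {i j : Fin k} (hij : (i : ℕ) ≤ j) : (f i : ℕ) + ((j : ℕ) - i) ≤ f j :=
  fin_gap_aux hf ((j : ℕ) - i) i j (by omega)

lemma card_sm (k N : ℕ) : Nat.card {f : Fin k → Fin N // StrictMono f} = N.choose k := by
  have e : {f : Fin k → Fin N // StrictMono f} ≃ {s : Finset (Fin N) // s.card = k} :=
    { toFun := fun f => ⟨Finset.univ.image f.1, by
        rw [Finset.card_image_of_injective _ f.2.injective, Finset.card_univ, Fintype.card_fin]⟩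
      invFun := fun s => ⟨fun i => s.1.orderEmbOfFin s.2 i, (s.1.orderEmbOfFin s.2).strictMono⟩
      left_inv := fun f => by
        apply Subtype.ext
        exact (Finset.orderEmbOfFin_unique _ (fun i => Finset.mem_image_of_mem _ (mem_univ i))
          f.2).symm
      right_inv := fun s => by
        apply Subtype.ext
        ext b
        simp only [Finset.mem_image, Finset.mem_univ, true_and]
        constructor
        · rintro ⟨i, rfl⟩; exact Finset.orderEmbOfFin_mem _ _ _
        · intro hb
          have : b ∈ Set.range (s.1.orderEmbOfFin s.2) := by
            rw [Finset.range_orderEmbOfFin]; exact hb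
          obtain ⟨i, hi⟩ := this
          exact ⟨i, hi⟩ }
  rw [Nat.card_congr e, Nat.card_eq_fintype_card, Fintype.card_finset_len, Fintype.card_fin]

/-- The combinatorial data: `B` (the image list) strictly monotone, `A` (the domain list),
with `B ≤ A` pointwise, the gap `A - B` monotone, and exactly `m` coincidences. -/
def TP (n p m : ℕ) (A B : Fin p → Fin n) : Prop :=
  StrictMono B ∧ (∀ i, (B i : ℕ) ≤ A i) ∧
    (∀ i j : Fin p, (i : ℕ) ≤ j → (A i : ℕ) + (B j : ℕ) ≤ (A j : ℕ) + (B i : ℕ)) ∧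
    (Finset.univ.filter (fun i => A i = B i)).card = m

lemma TP.smA {A B : Fin p → Fin n} (h : TP n p m A B) : StrictMono A := by
  intro i j hij
  have h1 := h.2.2.1 i j (le_of_lt hij)
  have h2 := h.1 hij
  rw [Fin.lt_def] at h2 ⊢
  omega

lemma TP.fix_iff {A B : Fin p → Fin n} (h : TP n p m A B) (i : Fin p) :
    A i = B i ↔ (i : ℕ) < m := by
  set s : Finset (Fin p) := Finset.univ.filter (fun i => A i = B i) with hs
  have hdc : ∀ i j : Fin p, i ≤ j → j ∈ s → i ∈ s := by
    intro i j hij hj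
    simp only [hs, mem_filter, mem_univ, true_and] at hj ⊢
    have h1 := h.2.2.1 i j hij
    have h2 := h.2.1 i
    have h3 := h.2.1 j
    have h4 : (A j : ℕ) = B j := by rw [hj]
    exact Fin.ext (by omega)
  have hcard : s.card = m := h.2.2.2
  constructor
  · intro hi
    have hmem : i ∈ s := by simp [hs, hi]
    have hsub : Finset.Iic i ⊆ s := fun j hj => hdc j i (mem_Iic.1 hj) hmem
    have := Finset.card_le_card hsub
    rw [Fin.card_Iic, hcard] at this
    omega
  · intro hi
    by_contra hne
    have hsub : s ⊆ Finset.Iio i := by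
      intro j hj
      rw [mem_Iio]
      by_contra hji
      exact hne (by simpa [hs] using hdc i j (not_lt.1 hji) hj)
    have := Finset.card_le_card hsub
    rw [Fin.card_Iio, hcard] at this
    omega

noncomputable def toFun (A B : Fin p → Fin n) : Fin n → Option (Fin n) :=
  fun x => if h : ∃ i, A i = x then some (B h.choose) else none

lemma toFun_apply {A B : Fin p → Fin n} (hA : Function.Injective A) (i : Fin p) :
    toFun A B (A i) = some (B i) := by
  have h : ∃ j, A j = A i := ⟨i, rfl⟩
  simp only [toFun, dif_pos h]
  rw [hA h.choose_spec]

lemma toFun_eq_some {A B : Fin p → Fin n} {x b : Fin n} (hx : toFun A B x = some b) :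
    ∃ i, A i = x ∧ B i = b := by
  by_cases h : ∃ i, A i = x
  · simp only [toFun, dif_pos h] at hx
    exact ⟨h.choose, h.choose_spec, by injection hx⟩
  · simp [toFun, dif_neg h] at hx

lemma toFun_eq_none {A B : Fin p → Fin n} {x : Fin n} (hx : ¬∃ i, A i = x) :
    toFun A B x = none := by simp [toFun, dif_neg hx]

/-- The map `toFun A B` satisfies all the ODCI properties. -/
lemma toFun_mem {A B : Fin p → Fin n} (h : TP n p m A B) :
    PInj (toFun A B) ∧ Contr (toFun A B) ∧ OrdPres (toFun A B) ∧ OrdDecr (toFun A B) ∧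
      pheight (toFun A B) = p ∧ pfix (toFun A B) = m := by
  obtain ⟨hB, hle, hd, hm⟩ := h
  have hA : StrictMono A := TP.smA ⟨hB, hle, hd, hm⟩
  refine ⟨?_, ?_, ?_, ?_, ?_, ?_⟩
  · intro x y a hx hy
    obtain ⟨i, hix, hia⟩ := toFun_eq_some hx
    obtain ⟨j, hjy, hja⟩ := toFun_eq_some hy
    have : i = j := hB.injective (by rw [hia, hja])
    rw [← hix, ← hjy, this]
  · intro x y a b hx hy
    obtain ⟨i, hix, hia⟩ := toFun_eq_some hx
    obtain ⟨j, hjy, hjb⟩ := toFun_eq_some hy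
    subst hix hjy hia hjb
    rcases le_total i j with hij | hij
    · have h1 := hd i j (by exact_mod_cast Fin.le_def.1 hij)
      have h2 := hle i; have h3 := hle j
      have h5 : (B i : ℕ) ≤ B j := hB.monotone hij
      have h6 : (A i : ℕ) ≤ A j := hA.monotone hij
      rw [abs_sub_comm ((B i).val : ℤ) _, abs_sub_comm ((A i).val : ℤ) _]
      rw [abs_of_nonneg (by omega), abs_of_nonneg (by omega)]
      omega
    · have h1 := hd j i (by exact_mod_cast Fin.le_def.1 hij)
      have h5 : (B j : ℕ) ≤ B i := hB.monotone hij
      have h6 : (A j : ℕ) ≤ A i := hA.monotone hij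
      rw [abs_of_nonneg (by omega), abs_of_nonneg (by omega)]
      omega
  · intro x y a b hx hy hxy
    obtain ⟨i, hix, hia⟩ := toFun_eq_some hx
    obtain ⟨j, hjy, hjb⟩ := toFun_eq_some hy
    subst hix hjy hia hjb
    exact hB.monotone ((hA.le_iff_le).1 hxy)
  · intro x a hx
    obtain ⟨i, hix, hia⟩ := toFun_eq_some hx
    subst hix hia
    exact Fin.le_def.2 (hle i)
  · have him : pim (toFun A B) = Finset.univ.image B := by
      ext b
      simp only [pim, mem_filter, mem_univ, true_and, mem_image]
      constructor
      · rintro ⟨x, hx⟩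
        obtain ⟨i, _, hib⟩ := toFun_eq_some hx
        exact ⟨i, hib⟩
      · rintro ⟨i, rfl⟩
        exact ⟨A i, toFun_apply hA.injective i⟩
    rw [pheight, him, Finset.card_image_of_injective _ hB.injective, card_univ, Fintype.card_fin]
  · have hfix : Finset.univ.filter (fun x => toFun A B x = some x) =
        (Finset.univ.filter (fun i => A i = B i)).image A := by
      ext x
      simp only [mem_filter, mem_univ, true_and, mem_image]
      constructor
      · intro hx
        obtain ⟨i, hix, hib⟩ := toFun_eq_some hx
        exact ⟨i, by rw [hix, hib], hix⟩
      · rintro ⟨i, hi, rfl⟩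
        rw [toFun_apply hA.injective, ← hi]
    rw [pfix, hfix, Finset.card_image_of_injective _ hA.injective, hm]

noncomputable def Phi (n p m : ℕ) :
    {AB : (Fin p → Fin n) × (Fin p → Fin n) // TP n p m AB.1 AB.2} →
    {f : Fin n → Option (Fin n) //
      PInj f ∧ Contr f ∧ OrdPres f ∧ OrdDecr f ∧ pheight f = p ∧ pfix f = m} :=
  fun AB => ⟨toFun AB.1.1 AB.1.2, toFun_mem AB.2⟩

lemma Phi_bij (n p m : ℕ) : Function.Bijective (Phi n p m) := by
  constructor
  · rintro ⟨⟨A, B⟩, hAB⟩ ⟨⟨A', B'⟩, hAB'⟩ h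
    have hf : toFun A B = toFun A' B' := congrArg Subtype.val h
    have hA := hAB.smA
    have hA' := hAB'.smA
    have hrange : Set.range A = Set.range A' := by
      ext x
      constructor
      · rintro ⟨i, rfl⟩
        have : toFun A' B' (A i) = some (B i) := by rw [← hf]; exact toFun_apply hA.injective i
        obtain ⟨j, hj, -⟩ := toFun_eq_some this
        exact ⟨j, hj⟩
      · rintro ⟨i, rfl⟩
        have : toFun A B (A' i) = some (B' i) := by rw [hf]; exact toFun_apply hA'.injective i
        obtain ⟨j, hj, -⟩ := toFun_eq_some this
        exact ⟨j, hj⟩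
    haveI : WellFoundedLT (Fin p) := inferInstance
    have hAA : A = A' := (StrictMono.range_inj hA hA').1 hrange
    subst hAA
    have hBB : B = B' := by
      funext i
      have h1 : toFun A B (A i) = some (B i) := toFun_apply hA.injective i
      have h2 : toFun A B (A i) = some (B' i) := by rw [hf]; exact toFun_apply hA.injective i
      rw [h1] at h2
      injection h2
    subst hBB
    rfl
  · rintro ⟨f, hInj, hC, hP, hD, hH, hF⟩
    have hcard : (pdom f).card = p := by
      rw [← hH, pheight]
      apply Finset.card_bij (fun x hx => (f x).get (by simpa [pdom] using hx))
      · intro x hx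
        simp only [pim, mem_filter, mem_univ, true_and]
        exact ⟨x, (Option.some_get _).symm⟩
      · intro x hx y hy hxy
        have hx' : (f x).isSome := by simpa [pdom] using hx
        have hy' : (f y).isSome := by simpa [pdom] using hy
        apply hInj x y ((f x).get hx') (Option.some_get hx').symm
        calc f y = some ((f y).get hy') := (Option.some_get hy').symm
          _ = some ((f x).get hx') := congrArg some hxy.symm
      · intro b hb
        simp only [pim, mem_filter, mem_univ, true_and] at hb
        obtain ⟨x, hx⟩ := hb
        refine ⟨x, by simp [pdom, hx], ?_⟩
        simp [hx]
    set A : Fin p → Fin n := fun i => (pdom f).orderEmbOfFin hcard i with hAdef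
    have hA : StrictMono A := ((pdom f).orderEmbOfFin hcard).strictMono
    have hmemA : ∀ i, A i ∈ pdom f := fun i => Finset.orderEmbOfFin_mem _ hcard i
    have hsome : ∀ i, (f (A i)).isSome := fun i => by simpa [pdom] using hmemA i
    set B : Fin p → Fin n := fun i => (f (A i)).get (hsome i) with hBdef
    have hfa : ∀ i, f (A i) = some (B i) := fun i => (Option.some_get (hsome i)).symm
    have hsurjA : ∀ x ∈ pdom f, ∃ i, A i = x := by
      intro x hx
      have : x ∈ Set.range ((pdom f).orderEmbOfFin hcard) := by
        rw [Finset.range_orderEmbOfFin]; exact hx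
      exact this
    have hBle : ∀ i j : Fin p, i ≤ j → B i ≤ B j := fun i j hij =>
      hP (A i) (A j) _ _ (hfa i) (hfa j) (hA.monotone hij)
    have hB : StrictMono B := by
      intro i j hij
      rcases (hBle i j hij.le).lt_or_eq with h | h
      · exact h
      · exfalso
        have hAij : A i = A j := hInj (A i) (A j) (B j) (by rw [hfa i, h]) (hfa j)
        exact ne_of_lt hij (hA.injective hAij)
    have hle : ∀ i, (B i : ℕ) ≤ A i := fun i => Fin.le_def.1 (hD (A i) (B i) (hfa i))
    have hd : ∀ i j : Fin p, (i : ℕ) ≤ j → (A i : ℕ) + (B j : ℕ) ≤ (A j : ℕ) + (B i : ℕ) := by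
      intro i j hij
      have hij' : i ≤ j := Fin.le_def.2 hij
      have hc := hC (A j) (A i) (B j) (B i) (hfa j) (hfa i)
      have h5 : (B i : ℕ) ≤ B j := Fin.le_def.1 (hBle i j hij')
      have h6 : (A i : ℕ) ≤ A j := Fin.le_def.1 (hA.monotone hij')
      rw [abs_of_nonneg (by omega), abs_of_nonneg (by omega)] at hc
      omega
    have hm : (Finset.univ.filter (fun i => A i = B i)).card = m := by
      rw [← hF, pfix]
      have hfix : Finset.univ.filter (fun x => f x = some x) =
          (Finset.univ.filter (fun i => A i = B i)).image A := by
        ext x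
        simp only [mem_filter, mem_univ, true_and, mem_image]
        constructor
        · intro hx
          have hxd : x ∈ pdom f := by simp [pdom, hx]
          obtain ⟨i, rfl⟩ := hsurjA x hxd
          refine ⟨i, ?_, rfl⟩
          have := hfa i
          rw [hx] at this
          exact Option.some_injective _ this
        · rintro ⟨i, hi, rfl⟩
          rw [hfa i, ← hi]
      rw [hfix, Finset.card_image_of_injective _ hA.injective]
    refine ⟨⟨(A, B), hB, hle, hd, hm⟩, ?_⟩
    apply Subtype.ext
    show toFun A B = f
    funext x
    by_cases hx : ∃ i, A i = x
    · obtain ⟨i, rfl⟩ := hx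
      rw [toFun_apply hA.injective, hfa]
    · rw [toFun_eq_none hx]
      cases hfx : f x with
      | none => rfl
      | some b => exact absurd (hsurjA x (by simp [pdom, hfx])) hx

lemma card_S_eq (n p m : ℕ) :
    Nat.card {f : Fin n → Option (Fin n) //
      PInj f ∧ Contr f ∧ OrdPres f ∧ OrdDecr f ∧ pheight f = p ∧ pfix f = m} =
    Nat.card {AB : (Fin p → Fin n) × (Fin p → Fin n) // TP n p m AB.1 AB.2} :=
  (Nat.card_congr (Equiv.ofBijective _ (Phi_bij n p m))).symm

/-- clamp a `Fin`-indexed function to a `ℕ`-indexed one -/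
def ext {k N : ℕ} (C : Fin k → Fin N) (t : ℕ) : ℕ :=
  if h : t < k then (C ⟨t, h⟩ : ℕ) else 0

lemma ext_lt {k N : ℕ} (C : Fin k → Fin N) {t : ℕ} (h : t < k) :
    ext C t = (C ⟨t, h⟩ : ℕ) := dif_pos h

lemma ext_eta {k N : ℕ} (C : Fin k → Fin N) (i : Fin k) :
    ext C (i : ℕ) = (C i : ℕ) := ext_lt C i.isLt

/-- the forward map of the main bijection, on values -/
def psiN (p m : ℕ) {n : ℕ} (A B : Fin p → Fin n) (i : ℕ) : ℕ :=
  if i < p then ext B i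
  else ext B (p - 1) + (ext A (m + (i - p)) - ext B (m + (i - p))) + (i - p)

section Forward

variable {A B : Fin p → Fin n} (h : TP n p m A B) (hmp : m < p)
include h

omit hmp in
lemma TP.extle : ∀ t, t < p → ext B t ≤ ext A t := by
  intro t ht
  rw [ext_lt A ht, ext_lt B ht]
  exact h.2.1 _

omit hmp in
lemma TP.extd : ∀ s t, s ≤ t → t < p → ext A s + ext B t ≤ ext A t + ext B s := by
  intro s t hst ht
  have hs : s < p := by omega
  rw [ext_lt A ht, ext_lt B ht, ext_lt A hs, ext_lt B hs]
  exact h.2.2.1 _ _ (by simpa using hst)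

omit hmp in
lemma TP.extBlt : ∀ s t, s < t → t < p → ext B s < ext B t := by
  intro s t hst ht
  have hs : s < p := by omega
  rw [ext_lt B ht, ext_lt B hs]
  exact h.1 (by rw [Fin.lt_def]; simpa using hst)

omit h hmp in
lemma extA_lt (A : Fin p → Fin n) : ∀ t, t < p → ext A t < n := by
  intro t ht; rw [ext_lt A ht]; exact (A _).isLt

omit hmp in
lemma TP.ext_strict : ∀ t, m ≤ t → t < p → ext B t < ext A t := by
  intro t hmt ht
  rw [ext_lt A ht, ext_lt B ht]
  have h1 := h.2.1 (⟨t, ht⟩ : Fin p)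
  have h2 : ¬ (A ⟨t, ht⟩ = B ⟨t, ht⟩) := by
    rw [h.fix_iff]
    simp only [Fin.val_mk]
    omega
  have h3 : (A ⟨t, ht⟩ : ℕ) ≠ (B ⟨t, ht⟩ : ℕ) := fun hc => h2 (Fin.ext hc)
  omega

include hmp in
lemma psiN_lt : ∀ i : Fin (2 * p - m), psiN p m A B i < n + p - m - 1 := by
  intro i
  have hi2 : (i : ℕ) < 2 * p - m := i.isLt
  by_cases hi : (i : ℕ) < p
  · have := extA_lt B i hi
    simp only [psiN, if_pos hi]
    omega
  · simp only [psiN, if_neg hi]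
    have hk : m + ((i : ℕ) - p) < p := by omega
    have h1 := h.extd (m + ((i : ℕ) - p)) (p - 1) (by omega) (by omega)
    have h2 := h.extle (m + ((i : ℕ) - p)) hk
    have h3 := h.extle (p - 1) (by omega)
    have h4 := extA_lt A (p - 1) (by omega)
    omega

include hmp in
lemma psiN_sm : ∀ i j : ℕ, i < j → j < 2 * p - m → psiN p m A B i < psiN p m A B j := by
  intro i j hij hj2
  by_cases hj : j < p
  · simp only [psiN, if_pos hj, if_pos (by omega : i < p)]
    exact h.extBlt i j hij hj
  · by_cases hi : i < p
    · simp only [psiN, if_pos hi, if_neg hj]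
      have hk : m + (j - p) < p := by omega
      have h1 : ext B i ≤ ext B (p - 1) := by
        rcases eq_or_lt_of_le (by omega : i ≤ p - 1) with hE | hE
        · rw [hE]
        · exact le_of_lt (h.extBlt i (p - 1) hE (by omega))
      have h2 := h.ext_strict (m + (j - p)) (by omega) hk
      omega
    · simp only [psiN, if_neg hi, if_neg hj]
      have hki : m + (i - p) < p := by omega
      have hkj : m + (j - p) < p := by omega
      have h1 := h.extd (m + (i - p)) (m + (j - p)) (by omega) hkj
      have h2 := h.extle (m + (i - p)) hki
      have h3 := h.extle (m + (j - p)) hkj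
      omega

end Forward

/-- the inverse map's `A`-values -/
def anN (p m : ℕ) {q N : ℕ} (g : Fin q → Fin N) (i : ℕ) : ℕ :=
  if i < m then ext g i
  else ext g i + (ext g (p + (i - m)) - ext g (p - 1)) - (i - m)

lemma card_T_lt (n p m : ℕ) (hmp : m < p) :
    Nat.card {AB : (Fin p → Fin n) × (Fin p → Fin n) // TP n p m AB.1 AB.2} =
    Nat.card {g : Fin (2 * p - m) → Fin (n + p - m - 1) // StrictMono g} := by
  apply Nat.card_congr
  refine Equiv.ofBijective
    (fun T => ⟨fun i => ⟨psiN p m T.1.1 T.1.2 i, psiN_lt T.2 hmp i⟩,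
      fun i j hij => by
        rw [Fin.lt_def]
        exact psiN_sm T.2 hmp i j (Fin.lt_def.1 hij) j.isLt⟩)
    ⟨?_, ?_⟩
  · -- injectivity
    rintro ⟨⟨A, B⟩, hT⟩ ⟨⟨A', B'⟩, hT'⟩ hEq
    replace hT : TP n p m A B := hT
    replace hT' : TP n p m A' B' := hT'
    simp only [Subtype.mk.injEq] at hEq
    have hv : ∀ t : ℕ, t < 2 * p - m → psiN p m A B t = psiN p m A' B' t := by
      intro t ht
      have h0 := congrArg Fin.val (congrFun (congrArg Subtype.val hEq) ⟨t, ht⟩)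
      simpa using h0
    have hBB : B = B' := by
      funext i
      have hip : (i : ℕ) < p := i.isLt
      have h1 := hv i (by omega)
      simp only [psiN, if_pos hip] at h1
      rw [ext_lt B hip, ext_lt B' hip] at h1
      exact Fin.ext (by simpa using h1)
    subst hBB
    have hAA : A = A' := by
      funext i
      by_cases him : (i : ℕ) < m
      · rw [(hT.fix_iff i).2 him, (hT'.fix_iff i).2 him]
      · have hip : (i : ℕ) < p := i.isLt
        have ht : p + ((i : ℕ) - m) < 2 * p - m := by omega
        have h1 := hv (p + ((i : ℕ) - m)) ht
        simp only [psiN, if_neg (by omega : ¬(p + ((i : ℕ) - m) < p))] at h1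
        rw [show m + (p + ((i : ℕ) - m) - p) = (i : ℕ) by omega] at h1
        rw [ext_eta A i, ext_eta A' i, ext_eta B i] at h1
        have h2 : (B i : ℕ) ≤ A i := hT.2.1 i
        have h3 : (B i : ℕ) ≤ A' i := hT'.2.1 i
        exact Fin.ext (by omega)
    subst hAA
    rfl
  · -- surjectivity
    rintro ⟨g, hg⟩
    have hgap : ∀ s t : ℕ, s ≤ t → t < 2 * p - m → ext g s + (t - s) ≤ ext g t := by
      intro s t hst ht
      have hs : s < 2 * p - m := by omega
      have := fin_gap hg (i := ⟨s, hs⟩) (j := ⟨t, ht⟩) (by simpa using hst)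
      simpa [ext_lt g hs, ext_lt g ht] using this
    have hglt : ∀ t, t < 2 * p - m → ext g t < n + p - m - 1 := by
      intro t ht
      rw [ext_lt g ht]
      exact (g _).isLt
    have hqlt : 2 * p - m - 1 < 2 * p - m := by omega
    have hglast := hglt _ hqlt
    have hBlt : ∀ t, t < p → ext g t < n := by
      intro t ht
      have h1 := hgap t (2 * p - m - 1) (by omega) hqlt
      omega
    have hAlt : ∀ t, t < p → anN p m g t < n := by
      intro t ht
      by_cases htm : t < m
      · simp only [anN, if_pos htm]; exact hBlt t ht
      · simp only [anN, if_neg htm]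
        have h1 := hgap t (p - 1) (by omega) (by omega)
        have h2 := hgap (p - 1) (p + (t - m)) (by omega) (by omega)
        have h3 := hgap (p + (t - m)) (2 * p - m - 1) (by omega) hqlt
        omega
    obtain ⟨B, hBval⟩ : ∃ B : Fin p → Fin n, ∀ t (ht : t < p), (B ⟨t, ht⟩ : ℕ) = ext g t :=
      ⟨fun i => ⟨ext g i, hBlt i i.isLt⟩, fun t ht => rfl⟩
    obtain ⟨A, hAval⟩ : ∃ A : Fin p → Fin n, ∀ t (ht : t < p), (A ⟨t, ht⟩ : ℕ) = anN p m g t :=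
      ⟨fun i => ⟨anN p m g i, hAlt i i.isLt⟩, fun t ht => rfl⟩
    have hBval' : ∀ i : Fin p, (B i : ℕ) = ext g i := fun i => hBval i i.isLt
    have hAval' : ∀ i : Fin p, (A i : ℕ) = anN p m g i := fun i => hAval i i.isLt
    have hTP : TP n p m A B := by
      refine ⟨?_, ?_, ?_, ?_⟩
      · intro i j hij
        have hjp : (j : ℕ) < p := j.isLt
        rw [Fin.lt_def, hBval' i, hBval' j]
        have hij' : (i : ℕ) < j := Fin.lt_def.1 hij
        have h1 := hgap i j (by omega) (by omega)
        omega
      · intro i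
        have hip : (i : ℕ) < p := i.isLt
        rw [hBval' i, hAval' i]
        by_cases him : (i : ℕ) < m
        · simp only [anN, if_pos him]; exact le_refl _
        · simp only [anN, if_neg him]
          have h2 := hgap (p - 1) (p + ((i : ℕ) - m)) (by omega) (by omega)
          omega
      · intro i j hij
        have hip : (i : ℕ) < p := i.isLt
        have hjp : (j : ℕ) < p := j.isLt
        rw [hAval' i, hAval' j, hBval' i, hBval' j]
        by_cases him : (i : ℕ) < m <;> by_cases hjm : (j : ℕ) < m
        · simp only [anN, if_pos him, if_pos hjm]; omega
        · simp only [anN, if_pos him, if_neg hjm]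
          have h2 := hgap (p - 1) (p + ((j : ℕ) - m)) (by omega) (by omega)
          omega
        · omega
        · simp only [anN, if_neg him, if_neg hjm]
          have h1 := hgap (p + ((i : ℕ) - m)) (p + ((j : ℕ) - m)) (by omega) (by omega)
          have h2 := hgap (p - 1) (p + ((i : ℕ) - m)) (by omega) (by omega)
          omega
      · have hfix : ∀ i : Fin p, (A i = B i) ↔ (i : ℕ) < m := by
          intro i
          have hip : (i : ℕ) < p := i.isLt
          rw [Fin.ext_iff, hAval' i, hBval' i]
          by_cases him : (i : ℕ) < m
          · simp only [anN, if_pos him]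
            simp [him]
          · simp only [anN, if_neg him]
            have h2 := hgap (p - 1) (p + ((i : ℕ) - m)) (by omega) (by omega)
            simp only [him, iff_false]
            omega
        have he1 : Finset.univ.filter (fun i => A i = B i) =
            Finset.univ.filter (fun i : Fin p => (i : ℕ) < m) :=
          Finset.filter_congr (fun i _ => by rw [hfix i])
        have he2 : Finset.univ.filter (fun i : Fin p => (i : ℕ) < m) =
            Finset.Iio (⟨m, hmp⟩ : Fin p) := by
          ext j
          simp [Finset.mem_Iio, Fin.lt_def]
        rw [he1, he2, Fin.card_Iio]
    refine ⟨⟨(A, B), hTP⟩, ?_⟩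
    apply Subtype.ext
    funext i
    apply Fin.ext
    show psiN p m A B (i : ℕ) = (g i : ℕ)
    rw [← ext_eta g i]
    by_cases hip : (i : ℕ) < p
    · simp only [psiN, if_pos hip]
      rw [ext_lt B hip, hBval _ hip]
    · simp only [psiN, if_neg hip]
      have hi2 : (i : ℕ) < 2 * p - m := i.isLt
      have hk : m + ((i : ℕ) - p) < p := by omega
      rw [ext_lt B (by omega : p - 1 < p), ext_lt A hk, ext_lt B hk,
        hBval _ (by omega : p - 1 < p), hAval _ hk, hBval _ hk]
      simp only [anN, if_neg (by omega : ¬(m + ((i : ℕ) - p) < m))]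
      rw [show m + ((i : ℕ) - p) - m = (i : ℕ) - p by omega,
        show p + ((i : ℕ) - p) = (i : ℕ) by omega]
      have h1 := hgap (p - 1) (i : ℕ) (by omega) hi2
      have h2 := hgap (m + ((i : ℕ) - p)) (p - 1) (by omega) (by omega)
      omega

lemma card_T_mp (n p : ℕ) :
    Nat.card {AB : (Fin p → Fin n) × (Fin p → Fin n) // TP n p p AB.1 AB.2} = n.choose p := by
  rw [← card_sm p n]
  apply Nat.card_congr
  refine ⟨fun T => ⟨T.1.2, T.2.1⟩,
    fun B => ⟨(B.1, B.1), B.2, fun i => le_refl _,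
      fun i j _ => by
        show (B.1 i : ℕ) + (B.1 j : ℕ) ≤ (B.1 j : ℕ) + (B.1 i : ℕ)
        omega,
      by
        show (Finset.univ.filter (fun i : Fin p => B.1 i = B.1 i)).card = p
        rw [Finset.filter_true_of_mem (fun _ _ => rfl), card_univ, Fintype.card_fin]⟩, ?_, ?_⟩
  · rintro ⟨⟨A, B⟩, hT⟩
    replace hT : TP n p p A B := hT
    have hall : A = B := funext fun i => (hT.fix_iff i).2 i.isLt
    apply Subtype.ext
    simp only
    rw [hall]
  · intro B
    rfl

end ODCIAux

/-- The number of elements of `ODCI_n` of height `p` with exactly `m` fixed points: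
`C(n,p)` if `m = p`, and `C(n+p-m-1, 2p-m)` if `m < p`. -/
theorem ODCI_count_of_height_and_fix (n p m : ℕ) :
    (m = p → Nat.card {f : Fin n → Option (Fin n) //
        PInj f ∧ Contr f ∧ OrdPres f ∧ OrdDecr f ∧ pheight f = p ∧ pfix f = m} =
      n.choose p) ∧
    (m < p → Nat.card {f : Fin n → Option (Fin n) //
        PInj f ∧ Contr f ∧ OrdPres f ∧ OrdDecr f ∧ pheight f = p ∧ pfix f = m} =
      (n + p - m - 1).choose (2 * p - m)) := by
  constructor
  · rintro rfl
    rw [ODCIAux.card_S_eq, ODCIAux.card_T_mp]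
  · intro hmp
    rw [ODCIAux.card_S_eq, ODCIAux.card_T_lt n p m hmp, ODCIAux.card_sm]
end

section
/- For every natural number n, the number of order-preserving, order-decreasing partial injective contractions of X_n = {1,…,n} equals the Fibonacci number F_{2n+1}; that is, |ODCI_n| = F_{2n+1}. -/
namespace ODCIproof

abbrev ODCI {n : ℕ} (f : Fin n → Option (Fin n)) : Prop :=
  PInj f ∧ Contr f ∧ OrdPres f ∧ OrdDecr f

abbrev Atype (n : ℕ) :=
  {f : Fin n → Option (Fin n) // PInj f ∧ Contr f ∧ OrdPres f ∧ OrdDecr f}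

abbrev Wtype (n : ℕ) :=
  {p : (Fin n → Option (Fin n)) × Fin (n + 1) //
    ODCI p.1 ∧ ∀ x b, p.1 x = some b → x.val < p.2.val}

variable {n : ℕ}

/-- restriction of a partial map on `Fin (n+1)` to `Fin n`. -/
def resf (f : Fin (n + 1) → Option (Fin (n + 1))) : Fin n → Option (Fin n) :=
  fun x => (f x.castSucc).bind fun a => if h : a.val < n then some ⟨a.val, h⟩ else none

/-- extension of a partial map on `Fin n` to `Fin (n+1)` with prescribed value at `last`. -/
def extf (f : Fin n → Option (Fin n)) (v : Option (Fin (n + 1))) :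
    Fin (n + 1) → Option (Fin (n + 1)) :=
  Fin.snoc (fun x => (f x).map Fin.castSucc) v

/-- top defect. -/
def dtop (f : Fin n → Option (Fin n)) : ℕ :=
  Finset.univ.sup fun x => (f x).elim 0 fun b => x.val - b.val

lemma resf_some {f : Fin (n + 1) → Option (Fin (n + 1))} {x b : Fin n} :
    resf f x = some b ↔ ∃ a : Fin (n + 1), f x.castSucc = some a ∧ a.val = b.val := by
  unfold resf
  cases h : f x.castSucc with
  | none => simp
  | some a =>
    simp only [Option.bind_some]
    constructor
    · intro hb
      split_ifs at hb with hlt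
      · exact ⟨a, rfl, by simpa using congrArg (fun o => o.elim 0 Fin.val) hb⟩
    · rintro ⟨a', ha', hv⟩
      have haa : a = a' := Option.some.inj (h ▸ ha')
      have hb := b.isLt
      have hlt : a.val < n := by rw [haa]; omega
      rw [dif_pos hlt]
      exact congrArg some (Fin.ext ((Fin.ext_iff.mp haa).trans hv))

lemma defect_mono {f : Fin n → Option (Fin n)} (h : ODCI f) {x y a b}
    (hx : f x = some a) (hy : f y = some b) (hxy : x.val ≤ y.val) :
    x.val + b.val ≤ y.val + a.val := by
  obtain ⟨hinj, hcon, hpres, hdec⟩ := h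
  have hab : a.val ≤ b.val := hpres x y a b hx hy (Fin.le_def.mpr hxy)
  have hc := hcon x y a b hx hy
  have h1 : |(a.val : ℤ) - (b.val : ℤ)| = (b.val : ℤ) - a.val := by
    rw [abs_sub_comm]; exact abs_of_nonneg (by omega)
  have h2 : |(x.val : ℤ) - (y.val : ℤ)| = (y.val : ℤ) - x.val := by
    rw [abs_sub_comm]; exact abs_of_nonneg (by omega)
  rw [h1, h2] at hc
  omega

lemma ODCI_resf {f : Fin (n + 1) → Option (Fin (n + 1))} (h : ODCI f) : ODCI (resf f) := by
  obtain ⟨hinj, hcon, hpres, hdec⟩ := h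
  refine ⟨?_, ?_, ?_, ?_⟩
  · intro x y a hx hy
    obtain ⟨a1, ha1, hv1⟩ := resf_some.mp hx
    obtain ⟨a2, ha2, hv2⟩ := resf_some.mp hy
    obtain rfl : a1 = a2 := Fin.ext (by omega)
    have := hinj _ _ _ ha1 ha2
    have := Fin.ext_iff.mp this
    simp only [Fin.coe_castSucc] at this
    exact Fin.ext this
  · intro x y a b hx hy
    obtain ⟨a1, ha1, hv1⟩ := resf_some.mp hx
    obtain ⟨b1, hb1, hv2⟩ := resf_some.mp hy
    have := hcon _ _ _ _ ha1 hb1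
    simp only [Fin.coe_castSucc, hv1, hv2] at this
    exact this
  · intro x y a b hx hy hxy
    obtain ⟨a1, ha1, hv1⟩ := resf_some.mp hx
    obtain ⟨b1, hb1, hv2⟩ := resf_some.mp hy
    have := hpres _ _ _ _ ha1 hb1 (Fin.castSucc_le_castSucc_iff.mpr hxy)
    rw [Fin.le_def] at this ⊢
    omega
  · intro x a hx
    obtain ⟨a1, ha1, hv1⟩ := resf_some.mp hx
    have := hdec _ _ ha1
    rw [Fin.le_def] at this ⊢
    simpa [hv1] using this

lemma extf_castSucc {f : Fin n → Option (Fin n)} {v} (x : Fin n) :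
    extf f v x.castSucc = (f x).map Fin.castSucc := by
  simp [extf]

lemma extf_last {f : Fin n → Option (Fin n)} {v} :
    extf f v (Fin.last n) = v := by
  simp [extf]

lemma resf_extf {f : Fin n → Option (Fin n)} {v} : resf (extf f v) = f := by
  funext x
  unfold resf
  rw [extf_castSucc]
  cases h : f x with
  | none => simp
  | some b => simp

lemma extf_resf {f : Fin (n + 1) → Option (Fin (n + 1))} (h : ODCI f) :
    extf (resf f) (f (Fin.last n)) = f := by
  funext x
  induction x using Fin.lastCases with
  | last => rw [extf_last]
  | cast i =>
    rw [extf_castSucc]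
    cases hi : f i.castSucc with
    | none =>
      have : resf f i = none := by
        unfold resf; rw [hi]; rfl
      rw [this]; rfl
    | some a =>
      have ha : a.val < n := by
        have := h.2.2.2 _ _ hi
        rw [Fin.le_def] at this
        simp only [Fin.coe_castSucc] at this
        omega
      have : resf f i = some ⟨a.val, ha⟩ := by
        unfold resf; rw [hi]; simp [ha]
      rw [this]
      simp [Fin.ext_iff]

def extOK (f : Fin n → Option (Fin n)) (a : Fin (n + 1)) : Prop :=
  ∀ x b, f x = some b → b.val < a.val ∧ x.val + a.val ≤ n + b.val

lemma extf_none_some {f : Fin n → Option (Fin n)} {x c : Fin (n + 1)}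
    (hx : extf f none x = some c) :
    ∃ (i b : Fin n), x = i.castSucc ∧ f i = some b ∧ c = b.castSucc := by
  induction x using Fin.lastCases with
  | last => rw [extf_last] at hx; exact absurd hx (by simp)
  | cast i =>
    rw [extf_castSucc] at hx
    cases hfi : f i with
    | none => rw [hfi] at hx; exact absurd hx (by simp)
    | some b =>
      rw [hfi] at hx
      exact ⟨i, b, rfl, hfi, by simpa using hx.symm⟩

lemma extf_some_some {f : Fin n → Option (Fin n)} {a : Fin (n + 1)} {x c : Fin (n + 1)}
    (hx : extf f (some a) x = some c) :
    (x = Fin.last n ∧ c = a) ∨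
      ∃ (i b : Fin n), x = i.castSucc ∧ f i = some b ∧ c = b.castSucc := by
  induction x using Fin.lastCases with
  | last =>
    rw [extf_last] at hx
    exact Or.inl ⟨rfl, (Option.some.inj hx).symm⟩
  | cast i =>
    rw [extf_castSucc] at hx
    cases hfi : f i with
    | none => rw [hfi] at hx; exact absurd hx (by simp)
    | some b =>
      rw [hfi] at hx
      exact Or.inr ⟨i, b, rfl, hfi, by simpa using hx.symm⟩

lemma ODCI_extf_none {f : Fin n → Option (Fin n)} (h : ODCI f) : ODCI (extf f none) := by
  obtain ⟨hinj, hcon, hpres, hdec⟩ := h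
  refine ⟨?_, ?_, ?_, ?_⟩
  · intro x y a hx hy
    obtain ⟨i, b, rfl, hfi, rfl⟩ := extf_none_some hx
    obtain ⟨j, b', rfl, hfj, hbb⟩ := extf_none_some hy
    obtain rfl : b = b' := Fin.castSucc_injective n hbb
    rw [hinj _ _ _ hfi hfj]
  · intro x y a b hx hy
    obtain ⟨i, c, rfl, hfi, rfl⟩ := extf_none_some hx
    obtain ⟨j, d, rfl, hfj, rfl⟩ := extf_none_some hy
    simpa using hcon _ _ _ _ hfi hfj
  · intro x y a b hx hy hxy
    obtain ⟨i, c, rfl, hfi, rfl⟩ := extf_none_some hx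
    obtain ⟨j, d, rfl, hfj, rfl⟩ := extf_none_some hy
    exact Fin.castSucc_le_castSucc_iff.mpr
      (hpres _ _ _ _ hfi hfj (Fin.castSucc_le_castSucc_iff.mp hxy))
  · intro x a hx
    obtain ⟨i, c, rfl, hfi, rfl⟩ := extf_none_some hx
    exact Fin.castSucc_le_castSucc_iff.mpr (hdec _ _ hfi)

lemma abs_helper {p q r s : ℕ} (h1 : q ≤ p) (h2 : s ≤ r) (h3 : p + s ≤ r + q) :
    |(p : ℤ) - q| ≤ |(r : ℤ) - s| := by
  rw [abs_of_nonneg (by omega : (0:ℤ) ≤ (p:ℤ) - q),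
    abs_of_nonneg (by omega : (0:ℤ) ≤ (r:ℤ) - s)]
  omega

lemma ODCI_extf_some {f : Fin n → Option (Fin n)} {a : Fin (n + 1)}
    (h : ODCI f) (hOK : extOK f a) : ODCI (extf f (some a)) := by
  obtain ⟨hinj, hcon, hpres, hdec⟩ := h
  refine ⟨?_, ?_, ?_, ?_⟩
  · intro x y c hx hy
    rcases extf_some_some hx with ⟨rfl, hca⟩ | ⟨i, b, rfl, hfi, hcb⟩
    · rcases extf_some_some hy with ⟨rfl, _⟩ | ⟨j, b', rfl, hfj, hcb'⟩
      · rfl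
      · subst hca
        have h1 := (hOK _ _ hfj).1
        have h2 := Fin.ext_iff.mp hcb'
        simp only [Fin.coe_castSucc] at h2
        omega
    · rcases extf_some_some hy with ⟨rfl, hca⟩ | ⟨j, b', rfl, hfj, hcb'⟩
      · subst hca
        have h1 := (hOK _ _ hfi).1
        have h2 := Fin.ext_iff.mp hcb
        simp only [Fin.coe_castSucc] at h2
        omega
      · obtain rfl : b = b' := Fin.castSucc_injective n (by rw [← hcb, ← hcb'])
        rw [hinj _ _ _ hfi hfj]
  · intro x y c d hx hy
    rcases extf_some_some hx with ⟨rfl, hca⟩ | ⟨i, b, rfl, hfi, hcb⟩ <;>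
      rcases extf_some_some hy with ⟨rfl, hda⟩ | ⟨j, b', rfl, hfj, hdb⟩
    · subst hca; subst hda; simp
    · subst hca; subst hdb
      obtain ⟨h1, h2⟩ := hOK _ _ hfj
      simp only [Fin.coe_castSucc, Fin.val_last]
      exact abs_helper h1.le j.isLt.le (by omega)
    · subst hda; subst hcb
      obtain ⟨h1, h2⟩ := hOK _ _ hfi
      simp only [Fin.coe_castSucc, Fin.val_last]
      rw [abs_sub_comm, abs_sub_comm ((i.val : ℤ)) ((n : ℤ))]
      exact abs_helper h1.le i.isLt.le (by omega)
    · subst hcb; subst hdb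
      simpa using hcon _ _ _ _ hfi hfj
  · intro x y c d hx hy hxy
    rcases extf_some_some hx with ⟨rfl, hca⟩ | ⟨i, b, rfl, hfi, hcb⟩
    · rcases extf_some_some hy with ⟨rfl, hda⟩ | ⟨j, b', rfl, hfj, hdb⟩
      · subst hca; subst hda; exact le_refl _
      · have := Fin.le_def.mp hxy
        simp only [Fin.val_last, Fin.coe_castSucc] at this
        exact absurd this (by have := j.isLt; omega)
    · rcases extf_some_some hy with ⟨rfl, hda⟩ | ⟨j, b', rfl, hfj, hdb⟩
      · subst hda; subst hcb
        have h1 := (hOK _ _ hfi).1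
        rw [Fin.le_def]
        simp only [Fin.coe_castSucc]
        omega
      · subst hcb; subst hdb
        exact Fin.castSucc_le_castSucc_iff.mpr
          (hpres _ _ _ _ hfi hfj (Fin.castSucc_le_castSucc_iff.mp hxy))
  · intro x c hx
    rcases extf_some_some hx with ⟨rfl, hca⟩ | ⟨i, b, rfl, hfi, hcb⟩
    · exact Fin.le_last c
    · subst hcb
      exact Fin.castSucc_le_castSucc_iff.mpr (hdec _ _ hfi)

lemma le_dtop {f : Fin n → Option (Fin n)} {x b} (hx : f x = some b) :
    x.val - b.val ≤ dtop f := by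
  have := Finset.le_sup (f := fun x => (f x).elim 0 fun b => x.val - b.val)
    (Finset.mem_univ x)
  simp only [hx] at this
  exact this

lemma dtop_le {f : Fin n → Option (Fin n)} {T : ℕ}
    (h : ∀ x b, f x = some b → x.val < T) : dtop f ≤ T :=
  Finset.sup_le fun x _ => by
    show ((f x).elim 0 fun b => x.val - b.val) ≤ T
    cases hx : f x with
    | none => exact Nat.zero_le T
    | some b => have := h x b hx; show x.val - b.val ≤ T; omega

lemma dtop_spec {f : Fin n → Option (Fin n)} (h : ODCI f) {x b} (hx : f x = some b) :
    ∃ xM bM, f xM = some bM ∧ dtop f = xM.val - bM.val ∧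
      ∀ y c, f y = some c → y.val ≤ xM.val ∧ c.val ≤ bM.val := by
  obtain ⟨xM, hxM, hmax⟩ := Finset.exists_max_image
    (Finset.univ.filter fun y => (f y).isSome) Fin.val ⟨x, by simp [hx]⟩
  rw [Finset.mem_filter] at hxM
  obtain ⟨bM, hbM⟩ := Option.isSome_iff_exists.mp hxM.2
  have hall : ∀ y c, f y = some c → y.val ≤ xM.val ∧ c.val ≤ bM.val := by
    intro y c hy
    have h1 : y.val ≤ xM.val := hmax y (Finset.mem_filter.mpr ⟨Finset.mem_univ y, by simp [hy]⟩)
    exact ⟨h1, Fin.le_def.mp (h.2.2.1 _ _ _ _ hy hbM (Fin.le_def.mpr h1))⟩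
  refine ⟨xM, bM, hbM, le_antisymm ?_ (le_dtop hbM), hall⟩
  refine Finset.sup_le fun y _ => ?_
  show ((f y).elim 0 fun c => y.val - c.val) ≤ xM.val - bM.val
  cases hy : f y with
  | none => exact Nat.zero_le _
  | some c =>
    show y.val - c.val ≤ xM.val - bM.val
    have h1 := defect_mono h hy hbM (hall y c hy).1
    have h2 : c.val ≤ y.val := Fin.le_def.mp (h.2.2.2 _ _ hy)
    omega

lemma extOK_of_last {F : Fin (n + 1) → Option (Fin (n + 1))} {a : Fin (n + 1)}
    (hF : ODCI F) (hl : F (Fin.last n) = some a) : extOK (resf F) a := by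
  intro x b hx
  obtain ⟨a1, ha1, hv⟩ := resf_some.mp hx
  have hcs : (x.castSucc : Fin (n + 1)) ≤ Fin.last n := by
    rw [Fin.le_def]; simp only [Fin.coe_castSucc, Fin.val_last]; exact x.isLt.le
  have hle : a1.val ≤ a.val := Fin.le_def.mp (hF.2.2.1 _ _ _ _ ha1 hl hcs)
  have hne : a1.val ≠ a.val := by
    intro he
    have heq : F (Fin.last n) = some a1 := by
      rw [hl]; exact congrArg some (Fin.ext he).symm
    have h2 := hF.1 _ _ _ ha1 heq
    have h3 := Fin.ext_iff.mp h2
    simp only [Fin.coe_castSucc, Fin.val_last] at h3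
    have := x.isLt
    omega
  have hdm := defect_mono hF ha1 hl (by simp only [Fin.coe_castSucc, Fin.val_last]; exact x.isLt.le)
  simp only [Fin.coe_castSucc, Fin.val_last] at hdm
  exact ⟨by omega, by omega⟩

lemma tlt_aux {F : Fin (n + 1) → Option (Fin (n + 1))} {a : Fin (n + 1)}
    (hF : ODCI F) (hl : F (Fin.last n) = some a) : a.val + dtop (resf F) ≤ n := by
  by_cases hne : ∃ x b, resf F x = some b
  · obtain ⟨x, b, hx⟩ := hne
    obtain ⟨xM, bM, hM, hdt, _⟩ := dtop_spec (ODCI_resf hF) hx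
    have hOK := extOK_of_last hF hl xM bM hM
    have hbx : bM.val ≤ xM.val := Fin.le_def.mp ((ODCI_resf hF).2.2.2 _ _ hM)
    omega
  · have hz : dtop (resf F) = 0 := Nat.le_zero.mp (Finset.sup_le fun x _ => by
      show ((resf F x).elim 0 fun b => x.val - b.val) ≤ 0
      cases hx : resf F x with
      | none => exact le_rfl
      | some b => exact absurd ⟨x, b, hx⟩ hne)
    rw [hz]
    have := a.isLt
    omega

lemma domlt_aux {F : Fin (n + 1) → Option (Fin (n + 1))} {a : Fin (n + 1)}
    (hF : ODCI F) (hl : F (Fin.last n) = some a) :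
    ∀ x b, resf F x = some b → x.val < a.val + dtop (resf F) := by
  intro x b hx
  have h1 := extOK_of_last hF hl x b hx
  have h2 := le_dtop hx
  have h3 : b.val ≤ x.val := Fin.le_def.mp ((ODCI_resf hF).2.2.2 _ _ hx)
  omega

lemma OK_of_marker {f : Fin n → Option (Fin n)} (hf : ODCI f) {t : Fin (n + 1)}
    (ht : ∀ x b, f x = some b → x.val < t.val) {a : Fin (n + 1)}
    (ha : a.val = t.val - dtop f) : extOK f a := by
  intro x b hx
  obtain ⟨xM, bM, hM, hdt, hmax⟩ := dtop_spec hf hx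
  have h1 := (hmax x b hx).2
  have h2 := le_dtop hx
  have h3 : b.val ≤ x.val := Fin.le_def.mp (hf.2.2.2 _ _ hx)
  have h4 : bM.val ≤ xM.val := Fin.le_def.mp (hf.2.2.2 _ _ hM)
  have h5 := ht xM bM hM
  have h6 := t.isLt
  exact ⟨by omega, by omega⟩

def E1 (n : ℕ) : Atype (n + 1) ≃ (Atype n) ⊕ (Wtype n) where
  toFun F :=
    if h : (F.1 (Fin.last n)).isSome then
      Sum.inr ⟨(resf F.1, ⟨((F.1 (Fin.last n)).get h).val + dtop (resf F.1),
          Nat.lt_succ_of_le (tlt_aux F.2 (Option.some_get h).symm)⟩),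
        ODCI_resf F.2, domlt_aux F.2 (Option.some_get h).symm⟩
    else Sum.inl ⟨resf F.1, ODCI_resf F.2⟩
  invFun := Sum.elim
    (fun A => ⟨extf A.1 none, ODCI_extf_none A.2⟩)
    (fun W => ⟨extf W.1.1 (some ⟨W.1.2.val - dtop W.1.1, by have := W.1.2.isLt; omega⟩),
      ODCI_extf_some W.2.1 (OK_of_marker W.2.1 W.2.2 rfl)⟩)
  left_inv F := by
    by_cases h : (F.1 (Fin.last n)).isSome
    · have hl : F.1 (Fin.last n) = some ((F.1 (Fin.last n)).get h) := (Option.some_get h).symm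
      beta_reduce
      rw [dif_pos h]
      apply Subtype.ext
      show extf (resf F.1) (some _) = F.1
      have e2 : extf (resf F.1) (some ((F.1 (Fin.last n)).get h)) = F.1 := by
        rw [← hl]; exact extf_resf F.2
      refine Eq.trans (congrArg (fun v => extf (resf F.1) (some v)) (Fin.ext ?_)) e2
      show ((F.1 (Fin.last n)).get h).val + dtop (resf F.1) - dtop (resf F.1)
        = ((F.1 (Fin.last n)).get h).val
      omega
    · have hl : F.1 (Fin.last n) = none := Option.not_isSome_iff_eq_none.mp h
      beta_reduce
      rw [dif_neg h]
      apply Subtype.ext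
      show extf (resf F.1) none = F.1
      rw [← hl]
      exact extf_resf F.2
  right_inv S := by
    cases S with
    | inl A =>
      have h : ¬ (extf A.1 none (Fin.last n)).isSome := by rw [extf_last]; simp
      simp only [Sum.elim_inl]
      beta_reduce
      refine (dif_neg h).trans ?_
      exact congrArg Sum.inl (Subtype.ext resf_extf)
    | inr W =>
      have hlast : extf W.1.1 (some ⟨W.1.2.val - dtop W.1.1, by have := W.1.2.isLt; omega⟩)
          (Fin.last n) = some ⟨W.1.2.val - dtop W.1.1, by have := W.1.2.isLt; omega⟩ :=
        extf_last
      have h : (extf W.1.1 (some ⟨W.1.2.val - dtop W.1.1, by have := W.1.2.isLt; omega⟩)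
          (Fin.last n)).isSome := by rw [hlast]; rfl
      simp only [Sum.elim_inr]
      beta_reduce
      refine (dif_pos h).trans ?_
      refine congrArg Sum.inr (Subtype.ext (Prod.ext ?_ ?_))
      · show resf (extf W.1.1 _) = W.1.1
        exact resf_extf
      · apply Fin.ext
        show ((extf W.1.1 _ (Fin.last n)).get h).val + dtop (resf (extf W.1.1 _)) = W.1.2.val
        have hd : dtop W.1.1 ≤ W.1.2.val := dtop_le W.2.2
        rw [resf_extf]
        have hg : ((extf W.1.1 (some ⟨W.1.2.val - dtop W.1.1,
            by have := W.1.2.isLt; omega⟩) (Fin.last n)).get h).val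
            = W.1.2.val - dtop W.1.1 := by
          simp only [hlast, Option.get_some]
        rw [hg]
        omega

def E2 (n : ℕ) : Wtype (n + 1) ≃ (Atype (n + 1)) ⊕ (Wtype n) where
  toFun W :=
    if h : W.1.2.val = n + 1 then Sum.inl ⟨W.1.1, W.2.1⟩
    else
      Sum.inr ⟨(resf W.1.1, ⟨W.1.2.val, by have := W.1.2.isLt; omega⟩),
        ODCI_resf W.2.1, fun x b hx => by
          obtain ⟨a1, ha1, hv⟩ := resf_some.mp hx
          have := W.2.2 _ _ ha1
          simpa using this⟩
  invFun := Sum.elim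
    (fun A => ⟨(A.1, Fin.last (n + 1)), A.2, fun x b _ => x.isLt⟩)
    (fun V => ⟨(extf V.1.1 none, V.1.2.castSucc), ODCI_extf_none V.2.1, fun x b hx => by
      obtain ⟨i, c, rfl, hfi, rfl⟩ := extf_none_some hx
      have := V.2.2 _ _ hfi
      simpa using this⟩)
  left_inv W := by
    by_cases h : W.1.2.val = n + 1
    · beta_reduce
      rw [dif_pos h]
      simp only [Sum.elim_inl]
      exact Subtype.ext (Prod.ext rfl (Fin.ext (by simpa using h.symm)))
    · beta_reduce
      rw [dif_neg h]
      simp only [Sum.elim_inr]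
      have hnone : W.1.1 (Fin.last n) = none := by
        cases hfl : W.1.1 (Fin.last n) with
        | none => rfl
        | some b =>
          have h1 : (Fin.last n).val < W.1.2.val := W.2.2 _ _ hfl
          have h2 := W.1.2.isLt
          rw [Fin.val_last] at h1
          omega
      refine Subtype.ext (Prod.ext ?_ ?_)
      · show extf (resf W.1.1) none = W.1.1
        rw [← hnone]
        exact extf_resf W.2.1
      · exact Fin.ext rfl
  right_inv S := by
    cases S with
    | inl A =>
      simp only [Sum.elim_inl]
      beta_reduce
      exact dif_pos (by simp : (Fin.last (n + 1)).val = n + 1)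
    | inr V =>
      simp only [Sum.elim_inr]
      beta_reduce
      refine (dif_neg (show ¬ (V.1.2.castSucc).val = n + 1 by have := V.1.2.isLt; simp only [Fin.coe_castSucc]; omega)).trans ?_
      refine congrArg Sum.inr (Subtype.ext (Prod.ext ?_ (Fin.ext (by simp))))
      show resf (extf V.1.1 none) = V.1.1
      exact resf_extf

lemma cardA_succ (n : ℕ) :
    Nat.card (Atype (n + 1)) = Nat.card (Atype n) + Nat.card (Wtype n) := by
  rw [Nat.card_congr (E1 n), Nat.card_sum]

lemma cardW_succ (n : ℕ) :
    Nat.card (Wtype (n + 1)) = Nat.card (Atype (n + 1)) + Nat.card (Wtype n) := by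
  rw [Nat.card_congr (E2 n), Nat.card_sum]

lemma cardA_zero : Nat.card (Atype 0) = 1 := by
  haveI : Subsingleton (Atype 0) := ⟨fun F G => Subtype.ext (funext fun x => x.elim0)⟩
  haveI : Nonempty (Atype 0) :=
    ⟨⟨fun x => x.elim0, fun x => x.elim0, fun x => x.elim0, fun x => x.elim0, fun x => x.elim0⟩⟩
  exact Nat.card_unique

lemma cardW_zero : Nat.card (Wtype 0) = 1 := by
  haveI : Subsingleton (Wtype 0) :=
    ⟨fun F G => Subtype.ext (Prod.ext (funext fun x => x.elim0)
      (Fin.ext (by have h1 := F.1.2.isLt; have h2 := G.1.2.isLt; omega)))⟩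
  haveI : Nonempty (Wtype 0) :=
    ⟨⟨(fun x => x.elim0, 0),
      ⟨fun x => x.elim0, fun x => x.elim0, fun x => x.elim0, fun x => x.elim0⟩,
      fun x => x.elim0⟩⟩
  exact Nat.card_unique

lemma main : ∀ n, Nat.card (Atype n) = Nat.fib (2 * n + 1) ∧
    Nat.card (Wtype n) = Nat.fib (2 * n + 2) := by
  intro n
  induction n with
  | zero => exact ⟨by rw [cardA_zero]; decide, by rw [cardW_zero]; decide⟩
  | succ k ih =>
    obtain ⟨hA, hW⟩ := ih
    have e1 : Nat.fib (2 * k + 3) = Nat.fib (2 * k + 1) + Nat.fib (2 * k + 2) := by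
      rw [show 2 * k + 3 = 2 * k + 1 + 2 from by ring, Nat.fib_add_two,
        show 2 * k + 1 + 1 = 2 * k + 2 from by ring]
    have e2 : Nat.fib (2 * k + 4) = Nat.fib (2 * k + 2) + Nat.fib (2 * k + 3) := by
      rw [show 2 * k + 4 = 2 * k + 2 + 2 from by ring, Nat.fib_add_two,
        show 2 * k + 2 + 1 = 2 * k + 3 from by ring]
    have hA' : Nat.card (Atype (k + 1)) = Nat.fib (2 * (k + 1) + 1) := by
      rw [cardA_succ, hA, hW, show 2 * (k + 1) + 1 = 2 * k + 3 from by ring, e1]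
    refine ⟨hA', ?_⟩
    rw [cardW_succ, hA', hW, show 2 * (k + 1) + 1 = 2 * k + 3 from by ring,
      show 2 * (k + 1) + 2 = 2 * k + 4 from by ring, e2, e1]
    omega

end ODCIproof

/-- The order of `ODCI_n` is the Fibonacci number `F_{2n+1}`. -/
theorem ODCI_order (n : ℕ) :
    Nat.card {f : Fin n → Option (Fin n) //
        PInj f ∧ Contr f ∧ OrdPres f ∧ OrdDecr f} = Nat.fib (2 * n + 1) := by
  exact (ODCIproof.main n).1
end

section
/- For every natural number n, there is a bijection between OCI_n, the set of order-preserving partial injective contractions of X_n = {1,…,n}, and OCI_n⁺, the set of order-reversing partial injective contractions of X_n; in particular |OCI_n| = |OCI_n⁺|. Moreover, the bijection can be chosen so that it preserves height and is the identity on maps of height at most 1. -/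
def revc {n : ℕ} (f : Fin n → Option (Fin n)) : Fin n → Option (Fin n) :=
  fun x => (f x).map Fin.rev

lemma revc_some {n : ℕ} {f : Fin n → Option (Fin n)} {x a} :
    revc f x = some a ↔ f x = some (Fin.rev a) := by
  simp only [revc, Option.map_eq_some_iff]
  constructor
  · rintro ⟨b, hb, rfl⟩; simpa [Fin.rev_rev] using hb
  · intro h; exact ⟨Fin.rev a, h, Fin.rev_rev a⟩

lemma revc_revc {n : ℕ} (f : Fin n → Option (Fin n)) : revc (revc f) = f := by
  funext x; cases h : f x <;> simp [revc, h, Fin.rev_rev]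

lemma val_rev_int {n : ℕ} (a : Fin n) : ((Fin.rev a).val : ℤ) = (n : ℤ) - 1 - a.val := by
  have : (Fin.rev a).val = n - (a.val + 1) := Fin.val_rev a
  rw [this, Nat.cast_sub a.isLt]
  push_cast; ring

lemma pinj_revc {n : ℕ} {f : Fin n → Option (Fin n)} (h : PInj f) : PInj (revc f) := by
  intro x y a hx hy
  exact h x y (Fin.rev a) (revc_some.mp hx) (revc_some.mp hy)

lemma contr_revc {n : ℕ} {f : Fin n → Option (Fin n)} (h : Contr f) : Contr (revc f) := by
  intro x y a b hx hy
  have := h x y (Fin.rev a) (Fin.rev b) (revc_some.mp hx) (revc_some.mp hy)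
  rw [val_rev_int, val_rev_int] at this
  calc |(a.val : ℤ) - b.val| = |((n:ℤ)-1-a.val) - ((n:ℤ)-1-b.val)| := by
        rw [abs_sub_comm]; ring_nf
    _ ≤ _ := this

lemma ordrev_revc {n : ℕ} {f : Fin n → Option (Fin n)} (h : OrdPres f) : OrdRev (revc f) := by
  intro x y a b hx hy hxy
  have := h x y (Fin.rev a) (Fin.rev b) (revc_some.mp hx) (revc_some.mp hy) hxy
  exact Fin.rev_le_rev.mp this

lemma ordpres_revc {n : ℕ} {f : Fin n → Option (Fin n)} (h : OrdRev f) : OrdPres (revc f) := by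
  intro x y a b hx hy hxy
  have := h x y (Fin.rev a) (Fin.rev b) (revc_some.mp hx) (revc_some.mp hy) hxy
  exact Fin.rev_le_rev.mp this

lemma pim_revc {n : ℕ} (f : Fin n → Option (Fin n)) :
    pim (revc f) = (pim f).image Fin.rev := by
  ext b
  simp only [pim, Finset.mem_filter, Finset.mem_univ, true_and, Finset.mem_image, revc_some]
  constructor
  · rintro ⟨x, hx⟩; exact ⟨Fin.rev b, ⟨x, hx⟩, Fin.rev_rev b⟩
  · rintro ⟨a, ⟨x, hx⟩, rfl⟩; exact ⟨x, by simpa [Fin.rev_rev] using hx⟩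

lemma pheight_revc {n : ℕ} (f : Fin n → Option (Fin n)) :
    pheight (revc f) = pheight f := by
  rw [pheight, pim_revc, Finset.card_image_of_injective _ Fin.rev_injective]; rfl

lemma one_val {n : ℕ} {f : Fin n → Option (Fin n)} (h : pheight f ≤ 1)
    {x y a b} (hx : f x = some a) (hy : f y = some b) : a = b := by
  have ha : a ∈ pim f := by simp [pim]; exact ⟨x, hx⟩
  have hb : b ∈ pim f := by simp [pim]; exact ⟨y, hy⟩
  exact Finset.card_le_one.mp h a ha b hb

lemma ordrev_of_height {n : ℕ} {f : Fin n → Option (Fin n)} (h : pheight f ≤ 1) : OrdRev f := by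
  intro x y a b hx hy _; exact le_of_eq (one_val h hy hx)

lemma ordpres_of_height {n : ℕ} {f : Fin n → Option (Fin n)} (h : pheight f ≤ 1) : OrdPres f := by
  intro x y a b hx hy _; exact le_of_eq (one_val h hx hy)
/-- There is a bijection between `OCI_n` and `OCI_n⁺` (in particular they have the
same cardinality) which preserves height and is the identity on maps of height at
most `1`. -/
theorem OCI_equiv_OCIplus (n : ℕ) :
    Nat.card {f : Fin n → Option (Fin n) // PInj f ∧ Contr f ∧ OrdPres f} =
      Nat.card {f : Fin n → Option (Fin n) // PInj f ∧ Contr f ∧ OrdRev f} ∧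
    ∃ e : {f : Fin n → Option (Fin n) // PInj f ∧ Contr f ∧ OrdPres f} ≃
          {f : Fin n → Option (Fin n) // PInj f ∧ Contr f ∧ OrdRev f},
      (∀ f, pheight (e f).val = pheight f.val) ∧
      (∀ f, pheight f.val ≤ 1 → (e f).val = f.val) := by
  set S₁ := {f : Fin n → Option (Fin n) // PInj f ∧ Contr f ∧ OrdPres f}
  set S₂ := {f : Fin n → Option (Fin n) // PInj f ∧ Contr f ∧ OrdRev f}
  let F : S₁ → S₂ := fun f =>
    if h : pheight f.val ≤ 1 then ⟨f.val, f.2.1, f.2.2.1, ordrev_of_height h⟩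
    else ⟨revc f.val, pinj_revc f.2.1, contr_revc f.2.2.1, ordrev_revc f.2.2.2⟩
  let G : S₂ → S₁ := fun f =>
    if h : pheight f.val ≤ 1 then ⟨f.val, f.2.1, f.2.2.1, ordpres_of_height h⟩
    else ⟨revc f.val, pinj_revc f.2.1, contr_revc f.2.2.1, ordpres_revc f.2.2.2⟩
  have hFval : ∀ f : S₁, (F f).val = if pheight f.val ≤ 1 then f.val else revc f.val := by
    intro f; by_cases h : pheight f.val ≤ 1 <;> simp [F, h]
  have hGval : ∀ f : S₂, (G f).val = if pheight f.val ≤ 1 then f.val else revc f.val := by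
    intro f; by_cases h : pheight f.val ≤ 1 <;> simp [G, h]
  have hFh : ∀ f : S₁, pheight (F f).val = pheight f.val := by
    intro f; rw [hFval]; by_cases h : pheight f.val ≤ 1 <;> simp [h, pheight_revc]
  have hGh : ∀ f : S₂, pheight (G f).val = pheight f.val := by
    intro f; rw [hGval]; by_cases h : pheight f.val ≤ 1 <;> simp [h, pheight_revc]
  have hGF : ∀ f : S₁, G (F f) = f := by
    intro f
    apply Subtype.ext
    rw [hGval, hFh, hFval]
    by_cases h : pheight f.val ≤ 1 <;> simp [h, revc_revc]
  have hFG : ∀ f : S₂, F (G f) = f := by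
    intro f
    apply Subtype.ext
    rw [hFval, hGh, hGval]
    by_cases h : pheight f.val ≤ 1 <;> simp [h, revc_revc]
  let e : S₁ ≃ S₂ := ⟨F, G, hGF, hFG⟩
  refine ⟨Nat.card_eq_of_bijective e e.bijective, e, hFh, ?_⟩
  intro f h
  show (F f).val = f.val
  rw [hFval]; simp [h]
end

section
/- Let |ORCI_n| be the number of partial injective contractions of X_n = {1,…,n} that are order-preserving or order-reversing. Then, as an identity of integers, 5·(|ORCI_n| + 1 + n²) = (6n−2)·F_{2n} − (2n−10)·F_{2n+1}; equivalently, |ORCI_n| = ((6n−2)/5)·F_{2n} − ((2n−10)/5)·F_{2n+1} − 1 − n², where F_k denotes the k-th Fibonacci number. -/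
open Finset

/-- The count of chains with top point `(p,q)` (0-indexed): region below is
`x < p, y < q, x + q ≤ y + p`. -/
def Nfun : ℕ → ℕ → ℕ
  | p, q => 1 + ∑ x ∈ (Finset.range p).attach,
      ∑ y ∈ Finset.range q, if x.1 + q ≤ y + p then Nfun x.1 y else 0
termination_by p _ => p
decreasing_by exact Finset.mem_range.mp x.2

lemma Nfun_def (p q : ℕ) : Nfun p q =
    1 + ∑ x ∈ Finset.range p, ∑ y ∈ Finset.range q,
      if x + q ≤ y + p then Nfun x y else 0 := by
  rw [Nfun]
  congr 1
  exact Finset.sum_attach (Finset.range p) (fun u => ∑ y ∈ Finset.range q, if u + q ≤ y + p then Nfun u y else 0)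

lemma sum_ite_range (q a c : ℕ) :
    ∑ y ∈ Finset.range q, (if a ≤ y then c else 0) = (q - a) * c := by
  induction q with
  | zero => simp
  | succ q ih =>
    rw [Finset.sum_range_succ, ih]
    by_cases h : a ≤ q
    · rw [if_pos h]
      have : q + 1 - a = (q - a) + 1 := by omega
      rw [this]; ring
    · rw [if_neg h]
      have : q + 1 - a = 0 := by omega
      have h2 : q - a = 0 := by omega
      rw [this, h2]; ring

lemma Nfun_eq_diag_sum : ∀ x, ∀ y, x ≤ y →
    Nfun x y = 1 + ∑ u ∈ Finset.range x, (x - u) * Nfun u u := by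
  intro x
  induction x using Nat.strong_induction_on with
  | _ x ih =>
    intro y hxy
    rw [Nfun_def]
    congr 1
    apply Finset.sum_congr rfl
    intro u hu
    have hu' : u < x := Finset.mem_range.mp hu
    have key : ∀ v ∈ Finset.range y,
        (if u + y ≤ v + x then Nfun u v else 0) =
        (if (u + y - x) ≤ v then Nfun u u else 0) := by
      intro v hv
      by_cases h : u + y ≤ v + x
      · rw [if_pos h, if_pos (by omega)]
        have h1 := ih u hu' v (by omega)
        have h2 := ih u hu' u le_rfl
        rw [h1, h2]
      · rw [if_neg h, if_neg (by omega)]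
    rw [Finset.sum_congr rfl key, sum_ite_range]
    have h3 : y - (u + y - x) = x - u := by omega
    rw [h3]

lemma Nfun_diag_le (x y : ℕ) (h : x ≤ y) : Nfun x y = Nfun x x := by
  rw [Nfun_eq_diag_sum x y h, Nfun_eq_diag_sum x x le_rfl]

lemma fib_odd_sum (p : ℕ) :
    ∑ u ∈ Finset.range p, Nat.fib (2*u+1) = Nat.fib (2*p) := by
  induction p with
  | zero => simp
  | succ p ih =>
    rw [Finset.sum_range_succ, ih]
    have h : 2*(p+1) = (2*p) + 2 := by ring
    rw [h, Nat.fib_add_two]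

lemma fib_weighted : ∀ p, 1 + ∑ u ∈ Finset.range p, (p - u) * Nat.fib (2*u+1)
    = Nat.fib (2*p+1) := by
  intro p
  induction p with
  | zero => simp
  | succ p ih =>
    have split : ∑ u ∈ Finset.range (p+1), (p+1-u) * Nat.fib (2*u+1)
        = (∑ u ∈ Finset.range p, (p-u) * Nat.fib (2*u+1))
          + (∑ u ∈ Finset.range p, Nat.fib (2*u+1)) + Nat.fib (2*p+1) := by
      rw [Finset.sum_range_succ]
      have : ∀ u ∈ Finset.range p, (p+1-u) * Nat.fib (2*u+1)
          = (p-u) * Nat.fib (2*u+1) + Nat.fib (2*u+1) := by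
        intro u hu
        have : u < p := Finset.mem_range.mp hu
        have e : p+1-u = (p-u)+1 := by omega
        rw [e]; ring
      rw [Finset.sum_congr rfl this, Finset.sum_add_distrib,
        show p+1-p = 1 from by omega, one_mul]
    rw [split, fib_odd_sum]
    have e1 : 2*(p+1)+1 = (2*p+1) + 2 := by ring
    have e2 : (2*p+1) + 1 = 2*p + 2 := by ring
    rw [e1, Nat.fib_add_two]
    have e3 : 2*p + 2 = 2*p + 2 := rfl
    -- goal : 1 + (Σ + fib(2p) + fib(2p+1)) = fib(2p+1) + fib(2p+1+1)
    have hf : Nat.fib (2*p+1+1) = Nat.fib (2*p) + Nat.fib (2*p+1) := by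
      have e : 2*p+1+1 = 2*p+2 := by ring
      rw [e, Nat.fib_add_two]
    omega

lemma Nfun_diag : ∀ p, Nfun p p = Nat.fib (2*p+1) := by
  intro p
  induction p using Nat.strong_induction_on with
  | _ p ih =>
    rw [Nfun_eq_diag_sum p p le_rfl]
    have : ∀ u ∈ Finset.range p, (p-u) * Nfun u u = (p-u) * Nat.fib (2*u+1) := by
      intro u hu
      rw [ih u (Finset.mem_range.mp hu)]
    rw [Finset.sum_congr rfl this, fib_weighted]

lemma Nfun_zero (p : ℕ) : Nfun p 0 = 1 := by
  rw [Nfun_def]; simp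

lemma Nfun_one (p : ℕ) : Nfun p 1 = p + 1 := by
  rw [Nfun_def]
  have : ∀ x ∈ Finset.range p, (∑ y ∈ Finset.range 1,
      if x + 1 ≤ y + p then Nfun x y else 0) = 1 := by
    intro x hx
    have hx' : x < p := Finset.mem_range.mp hx
    rw [Finset.sum_range_one, if_pos (by omega), Nfun_zero]
  rw [Finset.sum_congr rfl this, Finset.sum_const, Finset.card_range,
    smul_eq_mul, mul_one]
  omega

lemma Nfun_rec (p q : ℕ) :
    Nfun (p+2) (q+2) + Nfun p (q+1) = Nfun (p+1) (q+2) + 2 * Nfun (p+1) (q+1) := by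
  set F1 : ℕ → ℕ → ℕ := fun x y => if x + q ≤ y + p then Nfun x y else 0 with hF1
  set F2 : ℕ → ℕ → ℕ := fun x y => if x + q + 1 ≤ y + p then Nfun x y else 0 with hF2
  have conv : ∀ (a b : ℕ) (P P' : Prop) [Decidable P] [Decidable P'], (P ↔ P') →
      (if P then a else b) = (if P' then a else b) := by
    intro a b P P' _ _ h
    simp [h]
  have eA : Nfun (p+2) (q+2) = 1 + ∑ x ∈ Finset.range (p+2), ∑ y ∈ Finset.range (q+2), F1 x y := by
    rw [Nfun_def]
    congr 1
    apply Finset.sum_congr rfl; intro x _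
    apply Finset.sum_congr rfl; intro y _
    exact conv _ _ _ _ (by omega)
  have eB : Nfun (p+1) (q+1) = 1 + ∑ x ∈ Finset.range (p+1), ∑ y ∈ Finset.range (q+1), F1 x y := by
    rw [Nfun_def]
    congr 1
    apply Finset.sum_congr rfl; intro x _
    apply Finset.sum_congr rfl; intro y _
    exact conv _ _ _ _ (by omega)
  have eC : Nfun (p+1) (q+2) = 1 + ∑ x ∈ Finset.range (p+1), ∑ y ∈ Finset.range (q+2), F2 x y := by
    rw [Nfun_def]
    congr 1
    apply Finset.sum_congr rfl; intro x _
    apply Finset.sum_congr rfl; intro y _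
    exact conv _ _ _ _ (by omega)
  have eD : Nfun p (q+1) = 1 + ∑ x ∈ Finset.range p, ∑ y ∈ Finset.range (q+1), F2 x y := by
    rw [Nfun_def]
    congr 1
  have hT : ∑ x ∈ Finset.range (p+1), Nfun x (q+1)
      = (∑ x ∈ Finset.range p, Nfun x (q+1)) + Nfun p (q+1) := Finset.sum_range_succ _ _
  have hi : ∑ x ∈ Finset.range (p+2), ∑ y ∈ Finset.range (q+2), F1 x y
      = (∑ x ∈ Finset.range (p+1), ∑ y ∈ Finset.range (q+1), F1 x y)
        + Nfun (p+1) (q+1) + ∑ x ∈ Finset.range (p+1), Nfun x (q+1) := by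
    rw [Finset.sum_range_succ]
    have t1 : ∑ y ∈ Finset.range (q+2), F1 (p+1) y = Nfun (p+1) (q+1) := by
      rw [Finset.sum_range_succ]
      have z : ∀ y ∈ Finset.range (q+1), F1 (p+1) y = 0 := by
        intro y hy
        have : y < q+1 := Finset.mem_range.mp hy
        exact if_neg (by omega)
      rw [Finset.sum_eq_zero z, zero_add]
      exact if_pos (by omega)
    have t2 : ∀ x ∈ Finset.range (p+1), (∑ y ∈ Finset.range (q+2), F1 x y)
        = (∑ y ∈ Finset.range (q+1), F1 x y) + Nfun x (q+1) := by
      intro x hx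
      have : x < p+1 := Finset.mem_range.mp hx
      rw [Finset.sum_range_succ]
      congr 1
      exact if_pos (by omega)
    rw [Finset.sum_congr rfl t2, Finset.sum_add_distrib, t1]
    omega
  have hii : ∑ x ∈ Finset.range (p+1), ∑ y ∈ Finset.range (q+2), F2 x y
      = (∑ x ∈ Finset.range p, ∑ y ∈ Finset.range (q+1), F2 x y)
        + Nfun p (q+1) + ∑ x ∈ Finset.range p, Nfun x (q+1) := by
    rw [Finset.sum_range_succ]
    have t1 : ∑ y ∈ Finset.range (q+2), F2 p y = Nfun p (q+1) := by
      rw [Finset.sum_range_succ]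
      have z : ∀ y ∈ Finset.range (q+1), F2 p y = 0 := by
        intro y hy
        have : y < q+1 := Finset.mem_range.mp hy
        exact if_neg (by omega)
      rw [Finset.sum_eq_zero z, zero_add]
      exact if_pos (by omega)
    have t2 : ∀ x ∈ Finset.range p, (∑ y ∈ Finset.range (q+2), F2 x y)
        = (∑ y ∈ Finset.range (q+1), F2 x y) + Nfun x (q+1) := by
      intro x hx
      have : x < p := Finset.mem_range.mp hx
      rw [Finset.sum_range_succ]
      congr 1
      exact if_pos (by omega)
    rw [Finset.sum_congr rfl t2, Finset.sum_add_distrib, t1]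
    omega
  omega

def Ufun (m : ℕ) : ℕ := ∑ q ∈ Finset.range m, Nfun m q
def Sfun (m : ℕ) : ℕ := ∑ p ∈ Finset.range m, ∑ q ∈ Finset.range m, Nfun p q

lemma U_rec (n : ℕ) :
    Ufun (n+2) + Ufun n + Nat.fib (2*n+1) = 3 * Ufun (n+1) + Nat.fib (2*n+3) := by
  have h0 : ∑ t ∈ Finset.range n, (Nfun (n+2) (t+2) + Nfun n (t+1))
      = ∑ t ∈ Finset.range n, (Nfun (n+1) (t+2) + 2 * Nfun (n+1) (t+1)) := by
    apply Finset.sum_congr rfl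
    intro t _
    exact Nfun_rec n t
  rw [Finset.sum_add_distrib, Finset.sum_add_distrib, ← Finset.mul_sum] at h0
  have h1 : Ufun (n+2) = (∑ t ∈ Finset.range n, Nfun (n+2) (t+2)) + Nfun (n+2) 1 + Nfun (n+2) 0 := by
    show ∑ q ∈ Finset.range (n+2), Nfun (n+2) q = _
    rw [Finset.sum_range_succ' _ (n+1), Finset.sum_range_succ' _ n]
  have h2 : ∑ q ∈ Finset.range (n+1), Nfun n q
      = (∑ t ∈ Finset.range n, Nfun n (t+1)) + Nfun n 0 := Finset.sum_range_succ' _ n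
  have h2b : ∑ q ∈ Finset.range (n+1), Nfun n q = Ufun n + Nfun n n := Finset.sum_range_succ _ _
  have h3 : ∑ q ∈ Finset.range (n+2), Nfun (n+1) q
      = (∑ t ∈ Finset.range n, Nfun (n+1) (t+2)) + Nfun (n+1) 1 + Nfun (n+1) 0 := by
    rw [Finset.sum_range_succ' _ (n+1), Finset.sum_range_succ' _ n]
  have h3b : ∑ q ∈ Finset.range (n+2), Nfun (n+1) q
      = Ufun (n+1) + Nfun (n+1) (n+1) := Finset.sum_range_succ _ _
  have h4 : Ufun (n+1) = (∑ t ∈ Finset.range n, Nfun (n+1) (t+1)) + Nfun (n+1) 0 :=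
    Finset.sum_range_succ' _ n
  have d1 : Nfun n n = Nat.fib (2*n+1) := Nfun_diag n
  have d2 : Nfun (n+1) (n+1) = Nat.fib (2*n+3) := by
    have e : 2*(n+1)+1 = 2*n+3 := by ring
    rw [Nfun_diag, e]
  have z1 : Nfun (n+2) 0 = 1 := Nfun_zero _
  have z2 : Nfun (n+1) 0 = 1 := Nfun_zero _
  have z3 : Nfun n 0 = 1 := Nfun_zero _
  have o1 : Nfun (n+2) 1 = n + 3 := Nfun_one _
  have o2 : Nfun (n+1) 1 = n + 2 := Nfun_one _
  omega

lemma S_succ (n : ℕ) :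
    Sfun (n+1) = Sfun n + Ufun n + Nat.fib (2*n) + Nat.fib (2*n+1) := by
  show ∑ p ∈ Finset.range (n+1), ∑ q ∈ Finset.range (n+1), Nfun p q = _
  rw [Finset.sum_range_succ]
  have inner : ∀ p ∈ Finset.range n, ∑ q ∈ Finset.range (n+1), Nfun p q
      = (∑ q ∈ Finset.range n, Nfun p q) + Nat.fib (2*p+1) := by
    intro p hp
    have hp' : p < n := Finset.mem_range.mp hp
    rw [Finset.sum_range_succ]
    congr 1
    rw [Nfun_diag_le p n (by omega), Nfun_diag]
  rw [Finset.sum_congr rfl inner, Finset.sum_add_distrib, fib_odd_sum]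
  have last : ∑ q ∈ Finset.range (n+1), Nfun n q = Ufun n + Nat.fib (2*n+1) := by
    rw [Finset.sum_range_succ, Nfun_diag]
    rfl
  rw [last]
  have hS : Sfun n = ∑ p ∈ Finset.range n, ∑ q ∈ Finset.range n, Nfun p q := rfl
  omega

lemma U_closed (n : ℕ) : 5 * (Ufun n : ℤ) + n * Nat.fib (2*n)
    = 2 * Nat.fib (2*n) + 2 * n * Nat.fib (2*n+1) := by
  induction n using Nat.strong_induction_on with
  | _ n ih =>
    match n with
    | 0 => simp [Ufun]
    | 1 =>
      have : Ufun 1 = 1 := by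
        simp [Ufun, Finset.sum_range_one, Nfun_zero]
      rw [this]
      norm_num
    | (m+2) =>
      have h1 := ih m (by omega)
      have h2 := ih (m+1) (by omega)
      have hrec := U_rec m
      have e1 : 2*(m+1) = 2*m+2 := by ring
      have e2 : 2*(m+1)+1 = 2*m+3 := by ring
      have e3 : 2*(m+2) = 2*m+4 := by ring
      have e4 : 2*(m+2)+1 = 2*m+5 := by ring
      rw [e4, e3]
      rw [e2, e1] at h2
      have hf2n : Nat.fib (2*m+2) = Nat.fib (2*m) + Nat.fib (2*m+1) := Nat.fib_add_two
      have hf3n : Nat.fib (2*m+3) = Nat.fib (2*m+1) + Nat.fib (2*m+2) := Nat.fib_add_two (n := 2*m+1)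
      have hf4n : Nat.fib (2*m+4) = Nat.fib (2*m+2) + Nat.fib (2*m+3) := Nat.fib_add_two (n := 2*m+2)
      have hf5n : Nat.fib (2*m+5) = Nat.fib (2*m+3) + Nat.fib (2*m+4) := Nat.fib_add_two (n := 2*m+3)
      have hf2 : (Nat.fib (2*m+2) : ℤ) = Nat.fib (2*m) + Nat.fib (2*m+1) := by exact_mod_cast hf2n
      have hf3 : (Nat.fib (2*m+3) : ℤ) = Nat.fib (2*m+1) + Nat.fib (2*m+2) := by exact_mod_cast hf3n
      have hf4 : (Nat.fib (2*m+4) : ℤ) = Nat.fib (2*m+2) + Nat.fib (2*m+3) := by exact_mod_cast hf4n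
      have hf5 : (Nat.fib (2*m+5) : ℤ) = Nat.fib (2*m+3) + Nat.fib (2*m+4) := by exact_mod_cast hf5n
      have hrec' : (Ufun (m+2) : ℤ) + Ufun m + Nat.fib (2*m+1)
          = 3 * Ufun (m+1) + Nat.fib (2*m+3) := by exact_mod_cast hrec
      push_cast
      push_cast at h1 h2
      rw [hf3, hf2] at hrec'
      rw [hf3, hf2] at h2
      rw [hf5, hf4, hf3, hf2]
      linear_combination 5 * hrec' + 3 * h2 - h1

lemma S_closed (n : ℕ) : 5 * (Sfun n : ℤ)
    = 3*n*Nat.fib (2*n) - Nat.fib (2*n) + 5*Nat.fib (2*n+1) - n*Nat.fib (2*n+1) - 5 := by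
  induction n with
  | zero => simp [Sfun]
  | succ n ih =>
    have hs : (Sfun (n+1) : ℤ) = Sfun n + Ufun n + Nat.fib (2*n) + Nat.fib (2*n+1) := by
      exact_mod_cast S_succ n
    have hu := U_closed n
    have hf2n : Nat.fib (2*n+2) = Nat.fib (2*n) + Nat.fib (2*n+1) := Nat.fib_add_two
    have hf3n : Nat.fib (2*n+3) = Nat.fib (2*n+1) + Nat.fib (2*n+2) := Nat.fib_add_two (n := 2*n+1)
    have hf2 : (Nat.fib (2*n+2) : ℤ) = Nat.fib (2*n) + Nat.fib (2*n+1) := by exact_mod_cast hf2n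
    have hf3 : (Nat.fib (2*n+3) : ℤ) = Nat.fib (2*n+1) + Nat.fib (2*n+2) := by exact_mod_cast hf3n
    rw [show 2*(n+1)+1 = 2*n+3 from by ring, show 2*(n+1) = 2*n+2 from by ring, hf3, hf2]
    push_cast
    linear_combination 5 * hs + ih + hu

lemma numeric_main (n : ℕ) : 10 * (1 + (Sfun n : ℤ))
    = (6*n - 2) * Nat.fib (2*n) - (2*n - 10) * Nat.fib (2*n+1) := by
  have h := S_closed n
  linear_combination 2 * h

-- combinatorial development
variable {n : ℕ}

def OP (f : Fin n → Option (Fin n)) : Prop := PInj f ∧ Contr f ∧ OrdPres f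

def BelowN (P Q : ℕ) (f : Fin n → Option (Fin n)) : Prop :=
  ∀ x a, f x = some a → x.val < P ∧ a.val < Q ∧ x.val + Q ≤ a.val + P

def ptop (f : Fin n → Option (Fin n)) : Option (Fin n × Fin n) :=
  if h : (pdom f).Nonempty then
    some ((pdom f).max' h, (f ((pdom f).max' h)).getD ((pdom f).max' h))
  else none

lemma mem_pdom {f : Fin n → Option (Fin n)} {x : Fin n} :
    x ∈ pdom f ↔ (f x).isSome := by simp [pdom]

lemma ptop_none_iff {f : Fin n → Option (Fin n)} :
    ptop f = none ↔ ∀ x, f x = none := by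
  unfold ptop
  split_ifs with h
  · simp only [reduceCtorEq, false_iff]
    obtain ⟨x, hx⟩ := h
    intro hall
    rw [mem_pdom, hall x] at hx
    simp at hx
  · simp only [true_iff]
    intro x
    by_contra hne
    exact h ⟨x, mem_pdom.mpr (by cases hfx : f x <;> simp_all)⟩

lemma ptop_some_iff {f : Fin n → Option (Fin n)} {p q : Fin n} :
    ptop f = some (p, q) ↔ (f p = some q ∧ ∀ x a, f x = some a → x ≤ p) := by
  unfold ptop
  split_ifs with h
  · constructor
    · intro heq
      have h1 : (pdom f).max' h = p := by
        have := congrArg (fun o => (Option.map Prod.fst o)) heq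
        simpa using this
      subst h1
      have hmem := Finset.max'_mem (pdom f) h
      rw [mem_pdom] at hmem
      obtain ⟨a, ha⟩ := Option.isSome_iff_exists.mp hmem
      have h2 : a = q := by
        rw [ha] at heq
        simpa using heq
      subst h2
      refine ⟨ha, fun x b hx => ?_⟩
      exact Finset.le_max' _ _ (mem_pdom.mpr (by rw [hx]; rfl))
    · rintro ⟨hp, hbound⟩
      have hple : (pdom f).max' h ≤ p := by
        have hmem := Finset.max'_mem (pdom f) h
        rw [mem_pdom] at hmem
        obtain ⟨a, ha⟩ := Option.isSome_iff_exists.mp hmem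
        exact hbound _ _ ha
      have hpge : p ≤ (pdom f).max' h :=
        Finset.le_max' _ _ (mem_pdom.mpr (by rw [hp]; rfl))
      have : (pdom f).max' h = p := le_antisymm hple hpge
      rw [this, hp]
      rfl
  · constructor
    · intro h'; exact absurd h' (by simp)
    · rintro ⟨hp, -⟩
      exact absurd ⟨p, mem_pdom.mpr (by rw [hp]; rfl)⟩ h

lemma abs_helper {a b c d : ℕ} (h1 : b ≤ a) (h2 : d ≤ c) (h3 : d + a ≤ b + c) :
    |(a:ℤ) - b| ≤ |(c:ℤ) - d| := by
  rw [abs_of_nonneg (by omega : (0:ℤ) ≤ (a:ℤ) - b),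
    abs_of_nonneg (by omega : (0:ℤ) ≤ (c:ℤ) - d)]
  omega

lemma point_dom {f : Fin n → Option (Fin n)} (hf : OP f) {p q x a : Fin n}
    (hp : f p = some q) (hx : f x = some a) (hxp : x.val < p.val) :
    a.val < q.val ∧ x.val + q.val ≤ a.val + p.val := by
  have hle : x ≤ p := by rw [Fin.le_def]; omega
  have hax : a.val ≤ q.val := Fin.le_def.mp (hf.2.2 x p a q hx hp hle)
  have hne : a.val ≠ q.val := by
    intro h
    have haq : a = q := Fin.ext h
    subst haq
    have hxpe := hf.1 x p a hx hp
    rw [hxpe] at hxp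
    omega
  have hc := hf.2.1 x p a q hx hp
  have habs : |(x.val:ℤ) - p.val| = (p.val:ℤ) - x.val := by
    rw [abs_of_nonpos (by omega : (x.val:ℤ) - p.val ≤ 0)]; ring
  rw [habs] at hc
  have h2 : -((a.val:ℤ) - q.val) ≤ |(a.val:ℤ) - q.val| := neg_le_abs _
  have h4 : (q.val:ℤ) - a.val ≤ (p.val:ℤ) - x.val := le_trans (by omega) (le_trans h2 hc)
  omega

lemma below_of_top {P Q : ℕ} {f : Fin n → Option (Fin n)} (hf : OP f) {p q : Fin n}
    (hp : f p = some q) (hbound : ∀ x a, f x = some a → x ≤ p)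
    (h1 : p.val < P) (h2 : q.val < Q) (h3 : p.val + Q ≤ q.val + P) :
    BelowN P Q f := by
  intro x a hx
  have hxle : x.val ≤ p.val := Fin.le_def.mp (hbound x a hx)
  by_cases hxp : x.val = p.val
  · have hxep : x = p := Fin.ext hxp
    subst hxep
    have haq : a = q := by rw [hp] at hx; exact (Option.some_inj.mp hx).symm
    subst haq
    omega
  · have hd := point_dom hf hp hx (by omega)
    omega

lemma op_update_none {f : Fin n → Option (Fin n)} (hf : OP f) (p : Fin n) :
    OP (Function.update f p none) := by
  have key : ∀ x a, Function.update f p none x = some a → f x = some a := by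
    intro x a hx
    by_cases h : x = p
    · subst h; rw [Function.update_self] at hx; exact absurd hx (by simp)
    · rwa [Function.update_of_ne h] at hx
  exact ⟨fun x y a hx hy => hf.1 x y a (key _ _ hx) (key _ _ hy),
    fun x y a b hx hy => hf.2.1 x y a b (key _ _ hx) (key _ _ hy),
    fun x y a b hx hy => hf.2.2 x y a b (key _ _ hx) (key _ _ hy)⟩

lemma below_update_none {f : Fin n → Option (Fin n)} (hf : OP f) {p q : Fin n}
    (ht : ptop f = some (p, q)) :
    BelowN p.val q.val (Function.update f p none) := by
  obtain ⟨hp, hbound⟩ := ptop_some_iff.mp ht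
  intro x a hx
  have hxne : x ≠ p := by
    intro h; subst h; rw [Function.update_self] at hx; simp at hx
  rw [Function.update_of_ne hxne] at hx
  have hxle : x.val ≤ p.val := Fin.le_def.mp (hbound x a hx)
  have hvne : x.val ≠ p.val := fun h => hxne (Fin.ext h)
  have hd := point_dom hf hp hx (by omega)
  exact ⟨by omega, by omega, by omega⟩

lemma key_update_some (g : Fin n → Option (Fin n)) (p q : Fin n) :
    ∀ x a, Function.update g p (some q) x = some a → (x = p ∧ a = q) ∨ (x ≠ p ∧ g x = some a) := by
  intro x a hx
  by_cases h : x = p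
  · subst h; rw [Function.update_self] at hx
    exact Or.inl ⟨rfl, (Option.some_inj.mp hx).symm⟩
  · right; rw [Function.update_of_ne h] at hx; exact ⟨h, hx⟩

lemma op_update_some {g : Fin n → Option (Fin n)} (hg : OP g) {p q : Fin n}
    (hb : BelowN p.val q.val g) : OP (Function.update g p (some q)) := by
  have key := key_update_some g p q
  refine ⟨?_, ?_, ?_⟩
  · -- PInj
    intro x y a hx hy
    rcases key x a hx with ⟨hx1, hx2⟩ | ⟨hx1, hx2⟩ <;>
      rcases key y a hy with ⟨hy1, hy2⟩ | ⟨hy1, hy2⟩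
    · rw [hx1, hy1]
    · exfalso; have l := (hb y a hy2).2.1; rw [hx2] at l; exact absurd l (lt_irrefl _)
    · exfalso; have l := (hb x a hx2).2.1; rw [hy2] at l; exact absurd l (lt_irrefl _)
    · exact hg.1 x y a hx2 hy2
  · -- Contr
    intro x y a b hx hy
    rcases key x a hx with ⟨hx1, hx2⟩ | ⟨hx1, hx2⟩ <;>
      rcases key y b hy with ⟨hy1, hy2⟩ | ⟨hy1, hy2⟩
    · subst hx1; subst hx2; subst hy2; rw [hy1]; simp
    · subst hx1; subst hx2
      obtain ⟨l1, l2, l3⟩ := hb y b hy2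
      exact abs_helper (by omega) (by omega) (by omega)
    · subst hy1; subst hy2
      obtain ⟨l1, l2, l3⟩ := hb x a hx2
      rw [abs_sub_comm ((a.val:ℤ)) _, abs_sub_comm ((x.val:ℤ)) _]
      exact abs_helper (by omega) (by omega) (by omega)
    · exact hg.2.1 x y a b hx2 hy2
  · -- OrdPres
    intro x y a b hx hy hxy
    rcases key x a hx with ⟨hx1, hx2⟩ | ⟨hx1, hx2⟩ <;>
      rcases key y b hy with ⟨hy1, hy2⟩ | ⟨hy1, hy2⟩
    · subst hx2; subst hy2; exact le_refl _
    · exfalso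
      obtain ⟨l1, -, -⟩ := hb y b hy2
      subst hx1
      have := Fin.le_def.mp hxy
      omega
    · subst hy2
      obtain ⟨-, l2, -⟩ := hb x a hx2
      exact Fin.le_def.mpr (by omega)
    · exact hg.2.2 x y a b hx2 hy2 hxy

lemma below_self_none {g : Fin n → Option (Fin n)} {p q : Fin n}
    (hb : BelowN p.val q.val g) : g p = none := by
  cases h : g p with
  | none => rfl
  | some a => exact absurd (hb p a h).1 (lt_irrefl _)

lemma ptop_update_some {g : Fin n → Option (Fin n)} {p q : Fin n}
    (hb : BelowN p.val q.val g) : ptop (Function.update g p (some q)) = some (p, q) := by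
  apply ptop_some_iff.mpr
  refine ⟨Function.update_self _ _ _, fun x a hx => ?_⟩
  rcases key_update_some g p q x a hx with ⟨h1, _⟩ | ⟨_, h2⟩
  · subst h1; exact le_refl _
  · exact Fin.le_def.mpr (by have := (hb x a h2).1; omega)

def topEquiv (p q : Fin n) :
    {f : Fin n → Option (Fin n) // OP f ∧ ptop f = some (p, q)} ≃
    {g : Fin n → Option (Fin n) // OP g ∧ BelowN p.val q.val g} where
  toFun := fun f => ⟨Function.update f.1 p none,
    op_update_none f.2.1 p, below_update_none f.2.1 f.2.2⟩
  invFun := fun g => ⟨Function.update g.1 p (some q),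
    op_update_some g.2.1 g.2.2, ptop_update_some g.2.2⟩
  left_inv := fun fp => Subtype.ext (funext fun x => by
    obtain ⟨f, hf, ht⟩ := fp
    by_cases h : x = p
    · subst h
      simp only [Function.update_self]
      exact ((ptop_some_iff.mp ht).1).symm
    · simp [Function.update_of_ne h])
  right_inv := fun gp => Subtype.ext (funext fun x => by
    obtain ⟨g, hg, hb⟩ := gp
    by_cases h : x = p
    · subst h
      simp only [Function.update_self]
      exact (below_self_none hb).symm
    · simp [Function.update_of_ne h])

lemma op_empty : OP (fun _ => none : Fin n → Option (Fin n)) :=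
  ⟨fun x y a hx => absurd hx (by simp),
   fun x y a b hx => absurd hx (by simp),
   fun x y a b hx => absurd hx (by simp)⟩

lemma card_partition (C : (Fin n → Option (Fin n)) → Prop) :
    Nat.card {f : Fin n → Option (Fin n) // C f}
      = Nat.card {f : Fin n → Option (Fin n) // C f ∧ ptop f = none}
        + ∑ pq : Fin n × Fin n,
            Nat.card {f : Fin n → Option (Fin n) // C f ∧ ptop f = some pq} := by
  classical
  have fib : ∀ o : Option (Fin n × Fin n),
      ((Finset.univ.filter C).filter (fun f => ptop f = o)).card
        = Nat.card {f : Fin n → Option (Fin n) // C f ∧ ptop f = o} := by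
    intro o
    rw [Finset.filter_filter, Nat.card_eq_fintype_card, Fintype.card_subtype]
  rw [Nat.card_eq_fintype_card, Fintype.card_subtype]
  rw [Finset.card_eq_sum_card_fiberwise
    (f := ptop) (t := Finset.univ) (fun x _ => Finset.mem_univ _)]
  have : ∑ o ∈ (Finset.univ : Finset (Option (Fin n × Fin n))),
      ((Finset.univ.filter C).filter (fun f => ptop f = o)).card
    = ∑ o ∈ (Finset.univ : Finset (Option (Fin n × Fin n))),
      Nat.card {f : Fin n → Option (Fin n) // C f ∧ ptop f = o} :=
    Finset.sum_congr rfl (fun o _ => fib o)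
  rw [this, Fintype.sum_option]

lemma card_fiber_none (C : (Fin n → Option (Fin n)) → Prop) (hC : C (fun _ => none)) :
    Nat.card {f : Fin n → Option (Fin n) // C f ∧ ptop f = none} = 1 := by
  have huniq : ∀ f : {f : Fin n → Option (Fin n) // C f ∧ ptop f = none},
      f = ⟨fun _ => none, hC, ptop_none_iff.mpr (fun _ => rfl)⟩ := by
    rintro ⟨f, hCf, ht⟩
    apply Subtype.ext
    funext x
    exact (ptop_none_iff.mp ht) x
  rw [Nat.card_eq_one_iff_unique]
  exact ⟨⟨fun a b => (huniq a).trans (huniq b).symm⟩, ⟨_, hC, ptop_none_iff.mpr (fun _ => rfl)⟩⟩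

lemma sum_region (P Q : ℕ) (hP : P ≤ n) (hQ : Q ≤ n) :
    ∑ x : Fin n, ∑ y : Fin n,
        (if x.val < P ∧ y.val < Q ∧ x.val + Q ≤ y.val + P then Nfun x.val y.val else 0)
      = ∑ u ∈ Finset.range P, ∑ v ∈ Finset.range Q,
          (if u + Q ≤ v + P then Nfun u v else 0) := by
  have inner0 : ∀ x : Fin n, ∑ y : Fin n,
      (if x.val < P ∧ y.val < Q ∧ x.val + Q ≤ y.val + P then Nfun x.val y.val else 0)
    = ∑ v ∈ Finset.range n,
      (if x.val < P ∧ v < Q ∧ x.val + Q ≤ v + P then Nfun x.val v else 0) := fun x =>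
    Fin.sum_univ_eq_sum_range
      (fun v => if x.val < P ∧ v < Q ∧ x.val + Q ≤ v + P then Nfun x.val v else 0) n
  have step1 : ∑ x : Fin n, ∑ y : Fin n,
      (if x.val < P ∧ y.val < Q ∧ x.val + Q ≤ y.val + P then Nfun x.val y.val else 0)
    = ∑ u ∈ Finset.range n, ∑ v ∈ Finset.range n,
        (if u < P ∧ v < Q ∧ u + Q ≤ v + P then Nfun u v else 0) := by
    rw [Finset.sum_congr rfl (fun x _ => inner0 x)]
    exact Fin.sum_univ_eq_sum_range (fun u => ∑ v ∈ Finset.range n,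
      (if u < P ∧ v < Q ∧ u + Q ≤ v + P then Nfun u v else 0)) n
  rw [step1]
  rw [← Finset.sum_subset (Finset.range_subset_range.mpr hP)
    (fun u _ hu => Finset.sum_eq_zero (fun v _ =>
      if_neg (fun hcon => (Finset.mem_range.not.mp hu) hcon.1)))]
  apply Finset.sum_congr rfl
  intro u hu
  have hu' : u < P := Finset.mem_range.mp hu
  rw [← Finset.sum_subset (Finset.range_subset_range.mpr hQ)
    (fun v _ hv => if_neg (fun hcon => (Finset.mem_range.not.mp hv) hcon.2.1))]
  apply Finset.sum_congr rfl
  intro v hv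
  have hv' : v < Q := Finset.mem_range.mp hv
  exact if_congr (by constructor <;> intro h <;> [exact h.2.2; exact ⟨hu', hv', h⟩]) rfl rfl

lemma count_below : ∀ P Q : ℕ, P ≤ n → Q ≤ n →
    Nat.card {f : Fin n → Option (Fin n) // OP f ∧ BelowN P Q f} = Nfun P Q := by
  intro P
  induction P using Nat.strong_induction_on with
  | _ P ih =>
    intro Q hP hQ
    rw [card_partition]
    rw [card_fiber_none _ ⟨op_empty, fun x a hx => absurd hx (by simp)⟩]
    have fib : ∀ pq : Fin n × Fin n,
        Nat.card {f : Fin n → Option (Fin n) // (OP f ∧ BelowN P Q f) ∧ ptop f = some pq}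
          = if pq.1.val < P ∧ pq.2.val < Q ∧ pq.1.val + Q ≤ pq.2.val + P
            then Nfun pq.1.val pq.2.val else 0 := by
      rintro ⟨x, y⟩
      by_cases hreg : x.val < P ∧ y.val < Q ∧ x.val + Q ≤ y.val + P
      · rw [if_pos hreg]
        have hiff : ∀ f : Fin n → Option (Fin n),
            ((OP f ∧ BelowN P Q f) ∧ ptop f = some (x, y)) ↔ (OP f ∧ ptop f = some (x, y)) := by
          intro f
          constructor
          · rintro ⟨⟨h1, _⟩, h3⟩; exact ⟨h1, h3⟩
          · rintro ⟨h1, h3⟩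
            obtain ⟨hp, hbound⟩ := ptop_some_iff.mp h3
            exact ⟨⟨h1, below_of_top h1 hp hbound hreg.1 hreg.2.1 hreg.2.2⟩, h3⟩
        rw [Nat.card_congr (Equiv.subtypeEquivRight hiff),
          Nat.card_congr (topEquiv x y)]
        exact ih x.val hreg.1 y.val (le_of_lt x.isLt) (le_of_lt y.isLt)
      · rw [if_neg hreg, Nat.card_eq_zero]
        left
        constructor
        rintro ⟨f, ⟨h1, h2⟩, h3⟩
        exact hreg (h2 x y (ptop_some_iff.mp h3).1)
    have : ∑ pq : Fin n × Fin n,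
        Nat.card {f : Fin n → Option (Fin n) // (OP f ∧ BelowN P Q f) ∧ ptop f = some pq}
      = ∑ pq : Fin n × Fin n,
        (if pq.1.val < P ∧ pq.2.val < Q ∧ pq.1.val + Q ≤ pq.2.val + P
          then Nfun pq.1.val pq.2.val else 0) :=
      Finset.sum_congr rfl (fun pq _ => fib pq)
    rw [this, Fintype.sum_prod_type, sum_region P Q hP hQ, Nfun_def]

lemma count_OP : Nat.card {f : Fin n → Option (Fin n) // OP f} = 1 + Sfun n := by
  rw [card_partition OP, card_fiber_none _ op_empty]
  have fib : ∀ pq : Fin n × Fin n,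
      Nat.card {f : Fin n → Option (Fin n) // OP f ∧ ptop f = some pq}
        = Nfun pq.1.val pq.2.val := by
    rintro ⟨x, y⟩
    rw [Nat.card_congr (topEquiv x y)]
    exact count_below x.val y.val (le_of_lt x.isLt) (le_of_lt y.isLt)
  rw [Finset.sum_congr rfl (fun pq _ => fib pq), Fintype.sum_prod_type]
  congr 1
  have inner0 : ∀ x : Fin n, ∑ y : Fin n, Nfun x.val y.val
      = ∑ v ∈ Finset.range n, Nfun x.val v := fun x =>
    Fin.sum_univ_eq_sum_range (fun v => Nfun x.val v) n
  rw [Finset.sum_congr rfl (fun x _ => inner0 x)]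
  exact Fin.sum_univ_eq_sum_range (fun u => ∑ v ∈ Finset.range n, Nfun u v) n

def revMap (f : Fin n → Option (Fin n)) : Fin n → Option (Fin n) :=
  fun x => (f x).map Fin.rev

lemma revMap_eq_some {f : Fin n → Option (Fin n)} {x a : Fin n} :
    revMap f x = some a ↔ f x = some a.rev := by
  simp only [revMap, Option.map_eq_some_iff]
  constructor
  · rintro ⟨a', ha', rfl⟩
    rwa [Fin.rev_rev]
  · intro h
    exact ⟨a.rev, h, Fin.rev_rev a⟩

lemma pinj_revMap {f : Fin n → Option (Fin n)} (h : PInj f) : PInj (revMap f) :=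
  fun x y a hx hy => h x y a.rev (revMap_eq_some.mp hx) (revMap_eq_some.mp hy)

lemma contr_revMap {f : Fin n → Option (Fin n)} (h : Contr f) : Contr (revMap f) := by
  intro x y a b hx hy
  have hc := h x y a.rev b.rev (revMap_eq_some.mp hx) (revMap_eq_some.mp hy)
  have h1 : (Fin.rev a).val = n - (a.val + 1) := Fin.val_rev a
  have h2 : (Fin.rev b).val = n - (b.val + 1) := Fin.val_rev b
  have ha := a.isLt
  have hb := b.isLt
  have e1 : ((Fin.rev a).val : ℤ) = (n:ℤ) - 1 - a.val := by omega
  have e2 : ((Fin.rev b).val : ℤ) = (n:ℤ) - 1 - b.val := by omega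
  rw [e1, e2] at hc
  rw [show ((n:ℤ) - 1 - a.val) - ((n:ℤ) - 1 - b.val) = -((a.val:ℤ) - b.val) from by ring,
    abs_neg] at hc
  exact hc

lemma ordrev_revMap {f : Fin n → Option (Fin n)} (h : OrdPres f) : OrdRev (revMap f) := by
  intro x y a b hx hy hxy
  have := h x y a.rev b.rev (revMap_eq_some.mp hx) (revMap_eq_some.mp hy) hxy
  exact Fin.rev_le_rev.mp this

lemma ordpres_revMap {f : Fin n → Option (Fin n)} (h : OrdRev f) : OrdPres (revMap f) := by
  intro x y a b hx hy hxy
  have := h x y a.rev b.rev (revMap_eq_some.mp hx) (revMap_eq_some.mp hy) hxy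
  exact Fin.rev_le_rev.mp this

lemma revMap_revMap (f : Fin n → Option (Fin n)) : revMap (revMap f) = f := by
  funext x
  cases h : f x with
  | none => simp [revMap, h]
  | some a => simp [revMap, h, Fin.rev_rev]

def revEquiv :
    {f : Fin n → Option (Fin n) // PInj f ∧ Contr f ∧ OrdPres f} ≃
    {f : Fin n → Option (Fin n) // PInj f ∧ Contr f ∧ OrdRev f} where
  toFun f := ⟨revMap f.1, pinj_revMap f.2.1, contr_revMap f.2.2.1, ordrev_revMap f.2.2.2⟩
  invFun g := ⟨revMap g.1, pinj_revMap g.2.1, contr_revMap g.2.2.1, ordpres_revMap g.2.2.2⟩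
  left_inv := fun f => Subtype.ext (revMap_revMap f.1)
  right_inv := fun g => Subtype.ext (revMap_revMap g.1)

lemma incl_excl :
    Nat.card {f : Fin n → Option (Fin n) // PInj f ∧ Contr f ∧ (OrdPres f ∨ OrdRev f)}
      + Nat.card {f : Fin n → Option (Fin n) // PInj f ∧ Contr f ∧ (OrdPres f ∧ OrdRev f)}
    = Nat.card {f : Fin n → Option (Fin n) // PInj f ∧ Contr f ∧ OrdPres f}
      + Nat.card {f : Fin n → Option (Fin n) // PInj f ∧ Contr f ∧ OrdRev f} := by
  classical
  have key := Set.ncard_union_add_ncard_inter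
    {f : Fin n → Option (Fin n) | PInj f ∧ Contr f ∧ OrdPres f}
    {f : Fin n → Option (Fin n) | PInj f ∧ Contr f ∧ OrdRev f}
  rw [← Nat.card_coe_set_eq, ← Nat.card_coe_set_eq, ← Nat.card_coe_set_eq,
    ← Nat.card_coe_set_eq] at key
  have e1 : Nat.card ↥({f : Fin n → Option (Fin n) | PInj f ∧ Contr f ∧ OrdPres f}
        ∪ {f : Fin n → Option (Fin n) | PInj f ∧ Contr f ∧ OrdRev f})
      = Nat.card {f : Fin n → Option (Fin n) // PInj f ∧ Contr f ∧ (OrdPres f ∨ OrdRev f)} :=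
    Nat.card_congr (Equiv.subtypeEquivRight (fun f => by
      simp only [Set.mem_union, Set.mem_setOf_eq]
      tauto))
  have e2 : Nat.card ↥({f : Fin n → Option (Fin n) | PInj f ∧ Contr f ∧ OrdPres f}
        ∩ {f : Fin n → Option (Fin n) | PInj f ∧ Contr f ∧ OrdRev f})
      = Nat.card {f : Fin n → Option (Fin n) // PInj f ∧ Contr f ∧ (OrdPres f ∧ OrdRev f)} :=
    Nat.card_congr (Equiv.subtypeEquivRight (fun f => by
      simp only [Set.mem_inter_iff, Set.mem_setOf_eq]
      tauto))
  have e3 : Nat.card ↥{f : Fin n → Option (Fin n) | PInj f ∧ Contr f ∧ OrdPres f}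
      = Nat.card {f : Fin n → Option (Fin n) // PInj f ∧ Contr f ∧ OrdPres f} := rfl
  have e4 : Nat.card ↥{f : Fin n → Option (Fin n) | PInj f ∧ Contr f ∧ OrdRev f}
      = Nat.card {f : Fin n → Option (Fin n) // PInj f ∧ Contr f ∧ OrdRev f} := rfl
  rw [e1, e2, e3, e4] at key
  exact key


def PSmall (f : Fin n → Option (Fin n)) : Prop :=
  ∀ x y a b, f x = some a → f y = some b → x = y

lemma psmall_iff (f : Fin n → Option (Fin n)) :
    (PInj f ∧ Contr f ∧ (OrdPres f ∧ OrdRev f)) ↔ PSmall f := by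
  constructor
  · rintro ⟨hinj, hc, hp, hr⟩ x y a b hx hy
    rcases le_total x y with h | h
    · have h1 := hp x y a b hx hy h
      have h2 := hr x y a b hx hy h
      have hab : a = b := le_antisymm h1 h2
      subst hab
      exact hinj x y a hx hy
    · have h1 := hp y x b a hy hx h
      have h2 := hr y x b a hy hx h
      have hab : b = a := le_antisymm h1 h2
      subst hab
      exact hinj x y b hx hy
  · intro hs
    have hdet : ∀ x y a b, f x = some a → f y = some b → a = b := by
      intro x y a b hx hy
      have hxy := hs x y a b hx hy
      subst hxy
      rw [hx] at hy
      exact Option.some_inj.mp hy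
    refine ⟨fun x y a hx hy => hs x y a a hx hy, ?_, ?_, ?_⟩
    · intro x y a b hx hy
      have e := hs x y a b hx hy
      subst e
      have e2 := hdet x x a b hx hy
      subst e2
      simp
    · intro x y a b hx hy _
      exact le_of_eq (hdet x y a b hx hy)
    · intro x y a b hx hy _
      exact ge_of_eq (hdet x y a b hx hy)

lemma psmall_empty : PSmall (fun _ => none : Fin n → Option (Fin n)) :=
  fun x y a b hx _ => absurd hx (by simp)

lemma psmall_single (p q : Fin n) :
    PSmall (fun x => if x = p then some q else none) := by
  intro x y a b hx hy
  dsimp only at hx hy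
  by_cases h1 : x = p
  · by_cases h2 : y = p
    · rw [h1, h2]
    · rw [if_neg h2] at hy; exact absurd hy (by simp)
  · rw [if_neg h1] at hx; exact absurd hx (by simp)

def psmallEquiv : {f : Fin n → Option (Fin n) // PSmall f} ≃ Option (Fin n × Fin n) where
  toFun f := ptop f.1
  invFun o := o.elim ⟨fun _ => none, psmall_empty⟩
    (fun pq => ⟨fun x => if x = pq.1 then some pq.2 else none, psmall_single pq.1 pq.2⟩)
  left_inv := by
    rintro ⟨f, hf⟩
    apply Subtype.ext
    dsimp only
    cases h : ptop f with
    | none =>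
      funext x
      exact ((ptop_none_iff.mp h) x).symm
    | some pq =>
      obtain ⟨hp, hbound⟩ := ptop_some_iff.mp h
      funext x
      dsimp only [Option.elim]
      by_cases hx : x = pq.1
      · rw [if_pos hx, hx, hp]
      · rw [if_neg hx]
        cases hfx : f x with
        | none => rfl
        | some a => exact absurd (hf x pq.1 a pq.2 hfx hp) hx
  right_inv := by
    rintro (_ | ⟨p, q⟩)
    · dsimp only [Option.elim]
      exact ptop_none_iff.mpr (fun _ => rfl)
    · dsimp only [Option.elim]
      apply ptop_some_iff.mpr
      refine ⟨if_pos rfl, fun x a hx => ?_⟩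
      by_cases h : x = p
      · exact le_of_eq h
      · rw [if_neg h] at hx; exact absurd hx (by simp)

lemma psmall_card :
    Nat.card {f : Fin n → Option (Fin n) // PInj f ∧ Contr f ∧ (OrdPres f ∧ OrdRev f)}
      = n * n + 1 := by
  rw [Nat.card_congr (Equiv.subtypeEquivRight psmall_iff), Nat.card_congr psmallEquiv]
  simp [Nat.card_eq_fintype_card]

/-- The order of `ORCI_n` satisfies
`5·(|ORCI_n| + 1 + n²) = (6n-2)·F_{2n} - (2n-10)·F_{2n+1}`. -/
theorem ORCI_order (n : ℕ) :
    (5 : ℤ) * ((Nat.card {f : Fin n → Option (Fin n) //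
        PInj f ∧ Contr f ∧ (OrdPres f ∨ OrdRev f)} : ℤ) + 1 + (n : ℤ) ^ 2) =
      (6 * (n : ℤ) - 2) * Nat.fib (2 * n) -
        (2 * (n : ℤ) - 10) * Nat.fib (2 * n + 1) := by
  have hpres : Nat.card {f : Fin n → Option (Fin n) // PInj f ∧ Contr f ∧ OrdPres f}
      = 1 + Sfun n := count_OP
  have hrev : Nat.card {f : Fin n → Option (Fin n) // PInj f ∧ Contr f ∧ OrdRev f}
      = 1 + Sfun n := by
    rw [← Nat.card_congr (revEquiv (n := n))]
    exact count_OP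
  have hie := incl_excl (n := n)
  have hboth := psmall_card (n := n)
  rw [hpres, hrev, hboth] at hie
  have hz : (Nat.card {f : Fin n → Option (Fin n) //
      PInj f ∧ Contr f ∧ (OrdPres f ∨ OrdRev f)} : ℤ) + (n*n+1) = 2*(1 + Sfun n) := by
    exact_mod_cast congrArg (Nat.cast (R := ℤ)) (by omega : Nat.card {f : Fin n → Option (Fin n) //
      PInj f ∧ Contr f ∧ (OrdPres f ∨ OrdRev f)} + (n*n+1) = 2*(1 + Sfun n))
  have hnum := numeric_main n
  linear_combination 5 * hz + hnum
end
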